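/- arXiv:2207.01099 — 9 statements merged into one kernel-verified Lean document; each statement's English description precedes it below -/
import Mathlib

section
/- Let m ∈ ℕ, M, N ∈ ℕ, c ∈ ℂ*, and let a₁,…,a_M, b₁,…,b_N ∈ ℂ* be such that the multisets {a₁,…,a_M} and {b₁,…,b_N} are disjoint. Define the rational function f(z) = c·z^{-(m+3)}·∏_{j=1}^{M}(z-a_j) / ∏_{j=1}^{N}(z-b_j). If f(-1/conj(z)) = -conj(z⁴·f(z)) for every z ∈ ℂ* at which both sides are defined, then 2 + 2m - M + N = 0 (equivalently M - N = 2m + 2) and conj(c)·(-1)^m·∏_{j=1}^{N} b_j = c·∏_{j=1}^{M} a_j. -/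
open Finset Polynomial

lemma henneberg_prod_shift {k : ℕ} (w : Fin k → ℂ) (hw : ∀ j, w j ≠ 0) (z : ℂ) (hz : z ≠ 0) :
    (∏ j, (-1/z - w j)) * z ^ k = (-1) ^ k * (∏ j, w j) * ∏ j, (z + (w j)⁻¹) := by
  have h : ∀ j : Fin k, (-1/z - w j) * z = (-1) * (w j * (z + (w j)⁻¹)) := by
    intro j; field_simp [hw j]; ring
  calc (∏ j, (-1/z - w j)) * z ^ k = ∏ j, ((-1/z - w j) * z) := by
        rw [Finset.prod_mul_distrib, Finset.prod_const, Finset.card_univ, Fintype.card_fin]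
      _ = ∏ j, ((-1) * (w j * (z + (w j)⁻¹))) := Finset.prod_congr rfl (fun j _ => h j)
      _ = _ := by
        rw [Finset.prod_mul_distrib, Finset.prod_mul_distrib, Finset.prod_const,
          Finset.card_univ, Fintype.card_fin, mul_assoc]

lemma henneberg_pointwise (m M N : ℕ) (c z : ℂ) (a : Fin M → ℂ) (b : Fin N → ℂ)
    (ha : ∀ j, a j ≠ 0) (hb : ∀ j, b j ≠ 0) (hz : z ≠ 0)
    (hzb : ∀ j, z ≠ b j) (hzb' : ∀ j, -1/z ≠ (starRingEnd ℂ) (b j))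
    (e1 : (starRingEnd ℂ) c * ((-1/z)^(m+3))⁻¹ * (∏ j, (-1/z - (starRingEnd ℂ) (a j)))
        / (∏ j, (-1/z - (starRingEnd ℂ) (b j)))
        = -(z^4 * (c * (z^(m+3))⁻¹ * (∏ j, (z - a j)) / (∏ j, (z - b j))))) :
    (starRingEnd ℂ) c * (-1)^(m+3+M) * (∏ j, (starRingEnd ℂ) (a j)) * z^(2*m+2+N)
      * ((∏ j, (z + ((starRingEnd ℂ) (a j))⁻¹)) * (∏ j, (z - b j)))
    = (-c * (-1)^N * (∏ j, (starRingEnd ℂ) (b j))) * z^M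
      * ((∏ j, (z - a j)) * (∏ j, (z + ((starRingEnd ℂ) (b j))⁻¹))) := by
  have hca : ∀ j, (starRingEnd ℂ) (a j) ≠ 0 := fun j => by simpa using ha j
  have hcb : ∀ j, (starRingEnd ℂ) (b j) ≠ 0 := fun j => by simpa using hb j
  have h1 := henneberg_prod_shift (fun j => (starRingEnd ℂ) (a j)) hca z hz
  have h2 := henneberg_prod_shift (fun j => (starRingEnd ℂ) (b j)) hcb z hz
  have hLb : (∏ j, (-1/z - (starRingEnd ℂ) (b j))) ≠ 0 :=
    Finset.prod_ne_zero_iff.2 (fun j _ => sub_ne_zero.2 (hzb' j))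
  have hPb : (∏ j, (z - b j)) ≠ 0 :=
    Finset.prod_ne_zero_iff.2 (fun j _ => sub_ne_zero.2 (hzb j))
  have hinv : z^(m+3) * (z^(m+3))⁻¹ = 1 := mul_inv_cancel₀ (pow_ne_zero _ hz)
  have hm1 : ((-1:ℂ))^(m+3) * ((-1:ℂ))^(m+3) = 1 := by
    rw [← pow_add, ← two_mul, pow_mul]; norm_num
  have hpow : ((-1/z)^(m+3))⁻¹ = (-1)^(m+3) * z^(m+3) := by
    rw [div_pow, inv_div, div_eq_iff (by intro h; rw [h, mul_zero] at hm1; simp at hm1 : ((-1:ℂ))^(m+3) ≠ 0)]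
    linear_combination (-(z^(m+3))) * hm1
  rw [hpow] at e1
  rw [show -(z^4 * (c * (z^(m+3))⁻¹ * (∏ j, (z - a j)) / (∏ j, (z - b j))))
      = (-(z^4 * (c * (z^(m+3))⁻¹ * (∏ j, (z - a j))))) / (∏ j, (z - b j)) from by ring] at e1
  rw [div_eq_div_iff hLb hPb] at e1
  have e2 : (starRingEnd ℂ) c * ((-1)^(m+3) : ℂ) * z^(m+3) * z^(m+3)
      * (∏ j, (-1/z - (starRingEnd ℂ) (a j))) * (∏ j, (z - b j))
      = -(z^4 * c * (∏ j, (z - a j))) * (∏ j, (-1/z - (starRingEnd ℂ) (b j))) := by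
    linear_combination (z^(m+3)) * e1 - (z^4 * c * (∏ j, (z - a j)) * (∏ j, (-1/z - (starRingEnd ℂ) (b j)))) * hinv
  have G4 : (starRingEnd ℂ) c * (-1)^(m+3+M) * (∏ j, (starRingEnd ℂ) (a j)) * z^(2*m+2+N)
      * ((∏ j, (z + ((starRingEnd ℂ) (a j))⁻¹)) * (∏ j, (z - b j))) * z^4
    = (-c * (-1)^N * (∏ j, (starRingEnd ℂ) (b j))) * z^M
      * ((∏ j, (z - a j)) * (∏ j, (z + ((starRingEnd ℂ) (b j))⁻¹))) * z^4 := by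
    linear_combination z^(M+N) * e2
      - ((starRingEnd ℂ) c * (-1)^(m+3) * z^(2*m+6+N) * (∏ j, (z - b j))) * h1
      - (c * z^(M+4) * (∏ j, (z - a j))) * h2
  exact mul_right_cancel₀ (pow_ne_zero 4 hz) G4



/-- If the rational function
`f(z) = c·z^{-(m+3)}·∏_{j=1}^{M}(z-a_j) / ∏_{j=1}^{N}(z-b_j)` (with `c, a_j, b_j` nonzero and the
multisets of the `a_j` and the `b_j` disjoint) satisfies `f(-1/conj z) = -conj(z⁴·f z)` at every
`z ≠ 0` at which both sides are defined, then `2 + 2m - M + N = 0` and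
`conj(c)·(-1)^m·∏ b_j = c·∏ a_j`. -/
theorem generalized_henneberg_degree_and_constant_condition
    (m M N : ℕ) (c : ℂ) (hc : c ≠ 0)
    (a : Fin M → ℂ) (b : Fin N → ℂ)
    (ha : ∀ j, a j ≠ 0) (hb : ∀ j, b j ≠ 0)
    (hdisj : ∀ j k, a j ≠ b k)
    (f : ℂ → ℂ)
    (hf : ∀ z : ℂ, f z =
      c * (z ^ (m + 3))⁻¹ * (∏ j, (z - a j)) / (∏ j, (z - b j)))
    (heq : ∀ z : ℂ, z ≠ 0 → (∀ j, z ≠ b j) →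
      (∀ j, -1 / (starRingEnd ℂ) z ≠ b j) →
      f (-1 / (starRingEnd ℂ) z) = -(starRingEnd ℂ) (z ^ 4 * f z)) :
    (2 : ℤ) + 2 * m - M + N = 0 ∧
    (starRingEnd ℂ) c * (-1) ^ m * ∏ j, b j = c * ∏ j, a j := by
  have key : ∀ z : ℂ, z ≠ 0 → (∀ j, z ≠ b j) → (∀ j, -1/z ≠ (starRingEnd ℂ) (b j)) →
      (starRingEnd ℂ) c * (-1)^(m+3+M) * (∏ j, (starRingEnd ℂ) (a j)) * z^(2*m+2+N)
        * ((∏ j, (z + ((starRingEnd ℂ) (a j))⁻¹)) * (∏ j, (z - b j)))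
      = (-c * (-1)^N * (∏ j, (starRingEnd ℂ) (b j))) * z^M
        * ((∏ j, (z - a j)) * (∏ j, (z + ((starRingEnd ℂ) (b j))⁻¹))) := by
    intro z hz hzb hzb'
    apply henneberg_pointwise m M N c z a b ha hb hz hzb hzb'
    have hzb'' : ∀ j, -1 / (starRingEnd ℂ) z ≠ b j := by
      intro j h
      apply hzb' j
      rw [← h]
      simp [map_div₀]
    have e0 := heq z hz hzb hzb''
    rw [hf, hf] at e0
    have e1 := congrArg (starRingEnd ℂ) e0
    simpa [map_div₀, map_prod] using e1
  set C₁ : ℂ := (starRingEnd ℂ) c * (-1)^(m+3+M) * (∏ j, (starRingEnd ℂ) (a j)) with hC₁def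
  set C₂ : ℂ := -c * (-1)^N * (∏ j, (starRingEnd ℂ) (b j)) with hC₂def
  set P₁ : Polynomial ℂ := Polynomial.C C₁ *
    ((∏ j, (X + Polynomial.C (((starRingEnd ℂ) (a j))⁻¹))) * ∏ j, (X - Polynomial.C (b j))) with hP₁def
  set Q₁ : Polynomial ℂ := Polynomial.C C₂ *
    ((∏ j, (X - Polynomial.C (a j))) * ∏ j, (X + Polynomial.C (((starRingEnd ℂ) (b j))⁻¹))) with hQ₁def
  have hPQ : P₁ * X^(2*m+2+N) = Q₁ * X^M := by
    apply Polynomial.eq_of_infinite_eval_eq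
    have hbadfin : (({(0:ℂ)} ∪ Set.range b) ∪
        Set.range (fun j => -(((starRingEnd ℂ) (b j))⁻¹))).Finite :=
      ((Set.finite_singleton 0).union (Set.finite_range b)).union (Set.finite_range _)
    apply (hbadfin.infinite_compl).mono
    intro z hzmem
    simp only [Set.mem_compl_iff, Set.mem_union, Set.mem_singleton_iff, Set.mem_range,
      not_or, not_exists] at hzmem
    obtain ⟨⟨hz0, hzr⟩, hzr'⟩ := hzmem
    have hzb : ∀ j, z ≠ b j := fun j h => hzr j h.symm
    have hzb' : ∀ j, -1/z ≠ (starRingEnd ℂ) (b j) := by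
      intro j h
      apply hzr' j
      have hw : (starRingEnd ℂ) (b j) ≠ 0 := by simpa using hb j
      field_simp at h
      field_simp
      linear_combination h
    have hk := key z hz0 hzb hzb'
    simp only [Set.mem_setOf_eq, eval_mul, eval_pow, eval_X, eval_C, eval_prod, eval_add,
      eval_sub, hP₁def, hQ₁def]
    linear_combination hk
  have hC₁ : C₁ ≠ 0 := by
    refine mul_ne_zero (mul_ne_zero (by simpa using hc) (pow_ne_zero _ (by norm_num))) ?_
    exact Finset.prod_ne_zero_iff.2 fun j _ => by simpa using ha j
  have hC₂ : C₂ ≠ 0 := by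
    refine mul_ne_zero (mul_ne_zero (neg_ne_zero.2 hc) (pow_ne_zero _ (by norm_num))) ?_
    exact Finset.prod_ne_zero_iff.2 fun j _ => by simpa using hb j
  have hP₁0 : eval 0 P₁ ≠ 0 := by
    rw [hP₁def]
    simp only [eval_mul, eval_C, eval_prod, eval_add, eval_sub, eval_X, zero_add, zero_sub]
    refine mul_ne_zero hC₁ (mul_ne_zero ?_ ?_)
    · exact Finset.prod_ne_zero_iff.2 fun j _ => inv_ne_zero (by simpa using ha j)
    · exact Finset.prod_ne_zero_iff.2 fun j _ => neg_ne_zero.2 (hb j)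
  have hQ₁0 : eval 0 Q₁ ≠ 0 := by
    rw [hQ₁def]
    simp only [eval_mul, eval_C, eval_prod, eval_add, eval_sub, eval_X, zero_add, zero_sub]
    refine mul_ne_zero hC₂ (mul_ne_zero ?_ ?_)
    · exact Finset.prod_ne_zero_iff.2 fun j _ => neg_ne_zero.2 (ha j)
    · exact Finset.prod_ne_zero_iff.2 fun j _ => inv_ne_zero (by simpa using hb j)
  have hk : 2*m+2+N = M := by
    by_contra hne
    rcases Nat.lt_or_ge (2*m+2+N) M with h | h
    · have h2 := congrArg (fun p => Polynomial.coeff p (2*m+2+N)) hPQ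
      simp only [Polynomial.coeff_mul_X_pow', le_refl, if_true, Nat.sub_self,
        if_neg (Nat.not_le.2 h)] at h2
      rw [Polynomial.coeff_zero_eq_eval_zero] at h2
      exact hP₁0 h2
    · have h : M < 2*m+2+N := lt_of_le_of_ne h (Ne.symm hne)
      have h2 := congrArg (fun p => Polynomial.coeff p M) hPQ
      simp only [Polynomial.coeff_mul_X_pow', le_refl, if_true, Nat.sub_self,
        if_neg (Nat.not_le.2 h)] at h2
      rw [Polynomial.coeff_zero_eq_eval_zero] at h2
      exact hQ₁0 h2.symm
  constructor
  · push_cast; omega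
  · have h2 := congrArg (fun p => Polynomial.coeff p M) hPQ
    rw [hk] at h2
    simp only [Polynomial.coeff_mul_X_pow', le_refl, if_true, Nat.sub_self] at h2
    rw [Polynomial.coeff_zero_eq_eval_zero, Polynomial.coeff_zero_eq_eval_zero] at h2
    rw [hP₁def, hQ₁def] at h2
    simp only [eval_mul, eval_C, eval_prod, eval_add, eval_sub, eval_X, zero_add, zero_sub] at h2
    -- h2 : C₁ * ((∏ (conj a j)⁻¹) * (∏ -(b j))) = C₂ * ((∏ -(a j)) * (∏ (conj b j)⁻¹))
    have hnegb : (∏ j, -(b j)) = (-1)^N * ∏ j, b j := by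
      rw [show (fun j => -(b j)) = fun j => (-1) * b j from funext fun j => by ring,
        Finset.prod_mul_distrib, Finset.prod_const, Finset.card_univ, Fintype.card_fin]
    have hnega : (∏ j, -(a j)) = (-1)^M * ∏ j, a j := by
      rw [show (fun j => -(a j)) = fun j => (-1) * a j from funext fun j => by ring,
        Finset.prod_mul_distrib, Finset.prod_const, Finset.card_univ, Fintype.card_fin]
    have hA : (∏ j, (starRingEnd ℂ) (a j)) * (∏ j, ((starRingEnd ℂ) (a j))⁻¹) = 1 := by
      rw [← Finset.prod_mul_distrib, Finset.prod_eq_one]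
      intro j _
      exact mul_inv_cancel₀ (by simpa using ha j)
    have hB : (∏ j, (starRingEnd ℂ) (b j)) * (∏ j, ((starRingEnd ℂ) (b j))⁻¹) = 1 := by
      rw [← Finset.prod_mul_distrib, Finset.prod_eq_one]
      intro j _
      exact mul_inv_cancel₀ (by simpa using hb j)
    have hM1 : ((-1:ℂ))^M * ((-1:ℂ))^M = 1 := by
      rw [← pow_add, ← two_mul, pow_mul]; norm_num
    have hN1 : ((-1:ℂ))^N * ((-1:ℂ))^N = 1 := by
      rw [← pow_add, ← two_mul, pow_mul]; norm_num
    rw [hC₁def, hC₂def, hnegb, hnega] at h2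
    linear_combination (-((-1:ℂ)^M * (-1)^N)) * h2
      + (c * (∏ j, a j) - (starRingEnd ℂ) c * (-1)^m * ∏ j, b j) * hM1
      + ((c * (∏ j, a j) - (starRingEnd ℂ) c * (-1)^m * ∏ j, b j) * ((-1:ℂ)^M * (-1)^M)) * hN1
      + (-(starRingEnd ℂ) c * (-1)^m * (∏ j, b j) * ((-1)^M*(-1)^M*(-1)^N*(-1)^N)) * hA
      + (c * (∏ j, a j) * ((-1)^M*(-1)^M*(-1)^N*(-1)^N)) * hB
end

section
/- Let m ∈ ℕ, M, N ∈ ℕ, c ∈ ℂ*, and let a₁,…,a_M, b₁,…,b_N ∈ ℂ* be such that the multisets {a₁,…,a_M} and {b₁,…,b_N} are disjoint, and define f(z) = c·z^{-(m+3)}·∏_{j=1}^{M}(z-a_j) / ∏_{j=1}^{N}(z-b_j). If f(-1/conj(z)) = -conj(z⁴·f(z)) for every z ∈ ℂ* at which both sides are defined, then the multiset {a₁,…,a_M} equals the multiset {-1/conj(a₁),…,-1/conj(a_M)} and the multiset {b₁,…,b_N} equals the multiset {-1/conj(b₁),…,-1/conj(b_N)}; in particular M and N are even and the a_j (respectively b_j)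 are grouped into M/2 (respectively N/2) pairs of antipodal points of ℂ*. -/
lemma even_card_of_invariant {σ : ℂ → ℂ} (hσ : Function.Involutive σ) :
    ∀ (n : ℕ) (S : Multiset ℂ), Multiset.card S = n → S = S.map σ →
      (∀ x ∈ S, σ x ≠ x) → Even n := by
  intro n
  induction n using Nat.strong_induction_on with
  | _ n ih =>
    intro S hcard hinv hfix
    rcases S.empty_or_exists_mem with hS | ⟨x, hx⟩
    · subst hS; simp at hcard; simp [← hcard]
    · have hinj : Function.Injective σ := hσ.injective
      have hcount : ∀ y, Multiset.count (σ y) S = Multiset.count y S := by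
        intro y
        conv_lhs => rw [hinv]
        rw [Multiset.count_map_eq_count' σ S hinj]
      have hσx : σ x ∈ S.erase x := by
        rw [Multiset.mem_erase_of_ne (hfix x hx)]
        have h2 : σ x ∈ S.map σ := Multiset.mem_map_of_mem σ hx
        rwa [← hinv] at h2
      set T := (S.erase x).erase (σ x) with hT
      have hST : S = x ::ₘ σ x ::ₘ T := by
        rw [hT, Multiset.cons_erase hσx, Multiset.cons_erase hx]
      have hcountT : ∀ y, Multiset.count y S = Multiset.count y T
          + (if y = x then 1 else 0) + (if y = σ x then 1 else 0) := by
        intro y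
        rw [hST]
        simp [Multiset.count_cons]
        omega
      have hTinv : T = T.map σ := by
        ext y
        conv_rhs => rw [show y = σ (σ y) from (hσ y).symm,
          Multiset.count_map_eq_count' σ T hinj]
        have h1 := hcountT y
        have h2 := hcountT (σ y)
        rw [hcount y] at h2
        have e1 : (σ y = x) ↔ (y = σ x) := by
          constructor
          · intro h; rw [← h, hσ]
          · intro h; rw [h, hσ]
        have e2 : (σ y = σ x) ↔ (y = x) := ⟨fun h => hinj h, fun h => by rw [h]⟩
        simp only [e1, e2] at h2
        omega
      have hfixT : ∀ y ∈ T, σ y ≠ y := by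
        intro y hy
        exact hfix y (by rw [hST]; exact Multiset.mem_cons_of_mem (Multiset.mem_cons_of_mem hy))
      have hcardT : Multiset.card S = Multiset.card T + 2 := by rw [hST]; simp
      obtain ⟨k, hk⟩ := ih (Multiset.card T) (by omega) T rfl hTinv hfixT
      exact ⟨k + 1, by omega⟩


open Finset in
lemma prod_neg_inv {n : ℕ} (v : Fin n → ℂ) (hv : ∀ j, v j ≠ 0) (w : ℂ) (hw : w ≠ 0) :
    (∏ j, (-1/w - v j)) * w ^ n
      = (-1) ^ n * (∏ j, v j) * ∏ j, (w - (-1/(v j))) := by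
  calc (∏ j, (-1/w - v j)) * w ^ n = ∏ j, ((-1/w - v j) * w) := by
        rw [Finset.prod_mul_distrib, Finset.prod_const]
        simp
      _ = ∏ j, ((-1) * v j * (w - (-1/(v j)))) := by
        refine Finset.prod_congr rfl fun j _ => ?_
        field_simp [hv j]
        ring
      _ = (-1) ^ n * (∏ j, v j) * ∏ j, (w - (-1/(v j))) := by
        rw [Finset.prod_mul_distrib, Finset.prod_mul_distrib, Finset.prod_const]
        simp

lemma key (m M N : ℕ) (c : ℂ) (a : Fin M → ℂ) (b : Fin N → ℂ)
    (ha : ∀ j, a j ≠ 0) (hb : ∀ j, b j ≠ 0) (w : ℂ)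
    (hw : w ≠ 0) (hw2 : ∀ j, w ≠ (starRingEnd ℂ) (b j)) (hw3 : ∀ j, w ≠ -1/(b j))
    (hstar : c * ((-1/w)^(m+3))⁻¹ * (∏ j, (-1/w - a j)) / (∏ j, (-1/w - b j))
      = -(w^4 * ((starRingEnd ℂ) c * ((w^(m+3))⁻¹) * (∏ j, (w - (starRingEnd ℂ) (a j))) / (∏ j, (w - (starRingEnd ℂ) (b j)))))) :
    c * (-1)^(m+3+M+N) * (∏ j, a j) * w^(2*m+2+N) * (∏ j, (w - (-1/(a j)))) * (∏ j, (w - (starRingEnd ℂ) (b j)))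
      = -((starRingEnd ℂ) c) * (∏ j, b j) * w^M * (∏ j, (w - (starRingEnd ℂ) (a j))) * (∏ j, (w - (-1/(b j)))) := by
  have hwM : w ^ M ≠ 0 := pow_ne_zero _ hw
  have hwN : w ^ N ≠ 0 := pow_ne_zero _ hw
  have hA : (∏ j, (-1/w - a j)) = (-1)^M * (∏ j, a j) * (∏ j, (w - (-1/(a j)))) / w^M :=
    eq_div_of_mul_eq hwM (prod_neg_inv a ha w hw)
  have hB : (∏ j, (-1/w - b j)) = (-1)^N * (∏ j, b j) * (∏ j, (w - (-1/(b j)))) / w^N :=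
    eq_div_of_mul_eq hwN (prod_neg_inv b hb w hw)
  have hpow : ((-1 : ℂ)/w)^(m+3) = (-1)^(m+3)/w^(m+3) := div_pow _ _ _
  rw [hA, hB, hpow] at hstar
  have hPb : (∏ j, b j) ≠ 0 := Finset.prod_ne_zero_iff.mpr fun j _ => hb j
  have hBne : (∏ j, (w - (-1/(b j)))) ≠ 0 :=
    Finset.prod_ne_zero_iff.mpr fun j _ => sub_ne_zero_of_ne (hw3 j)
  have hB'ne : (∏ j, (w - (starRingEnd ℂ) (b j))) ≠ 0 :=
    Finset.prod_ne_zero_iff.mpr fun j _ => sub_ne_zero_of_ne (hw2 j)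
  have hBne2 : (∏ j, (w - -(1/(b j)))) ≠ 0 := by simpa only [neg_div] using hBne
  field_simp [hw, hPb, hBne, hB'ne, hBne2] at hstar
  simp only [← neg_div] at hstar
  have hmul : ((-1 : ℂ)^(m+3+N) * w^4) ≠ 0 :=
    mul_ne_zero (pow_ne_zero _ (by norm_num)) (pow_ne_zero _ hw)
  apply mul_right_cancel₀ hmul
  have h12 : ((-1 : ℂ))^(m*2) * (-1)^(N*2) = 1 := by
    rw [mul_comm m 2, mul_comm N 2, pow_mul, pow_mul]; norm_num
  linear_combination hstar + ((((c * ∏ j, a j) * w^6 * w^(m*2) * w^N *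
    ∏ j, (w - -1/(a j))) * ∏ j, (w - (starRingEnd ℂ) (b j))) * (-1)^M) * h12


open Polynomial in
lemma roots_prod_fin {n : ℕ} (v : Fin n → ℂ) :
    (∏ j, (X - C (v j))).roots = Multiset.map v Finset.univ.val := by
  rw [Finset.prod_eq_multiset_prod]
  rw [show Multiset.map (fun j => X - C (v j)) Finset.univ.val
      = Multiset.map (fun a => X - C a) (Multiset.map v Finset.univ.val) by
    rw [Multiset.map_map]; rfl]
  exact roots_multiset_prod_X_sub_C _

lemma sigma_involutive : Function.Involutive (fun x : ℂ => -1 / (starRingEnd ℂ) x) := by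
  intro x
  by_cases hx : x = 0
  · simp [hx]
  · have hcx : (starRingEnd ℂ) x ≠ 0 := by simpa using hx
    simp only [map_div₀, map_neg, map_one, Complex.conj_conj]
    field_simp

open Polynomial

/-- If the rational function
`f(z) = c·z^{-(m+3)}·∏_{j=1}^{M}(z-a_j) / ∏_{j=1}^{N}(z-b_j)` (with `c, a_j, b_j` nonzero and the
multisets of the `a_j` and the `b_j` disjoint) satisfies `f(-1/conj z) = -conj(z⁴·f z)` at every
`z ≠ 0` at which both sides are defined, then the multiset of the `a_j` (resp. of the `b_j`) is
invariant under the antipodal map `a ↦ -1/conj a`; in particular `M` and `N` are even. -/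
theorem generalized_henneberg_antipodal_invariance
    (m M N : ℕ) (c : ℂ) (hc : c ≠ 0)
    (a : Fin M → ℂ) (b : Fin N → ℂ)
    (ha : ∀ j, a j ≠ 0) (hb : ∀ j, b j ≠ 0)
    (hdisj : ∀ j k, a j ≠ b k)
    (f : ℂ → ℂ)
    (hf : ∀ z : ℂ, f z =
      c * (z ^ (m + 3))⁻¹ * (∏ j, (z - a j)) / (∏ j, (z - b j)))
    (heq : ∀ z : ℂ, z ≠ 0 → (∀ j, z ≠ b j) →
      (∀ j, -1 / (starRingEnd ℂ) z ≠ b j) →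
      f (-1 / (starRingEnd ℂ) z) = -(starRingEnd ℂ) (z ^ 4 * f z)) :
    Multiset.map a Finset.univ.val =
      Multiset.map (fun j => -1 / (starRingEnd ℂ) (a j)) Finset.univ.val ∧
    Multiset.map b Finset.univ.val =
      Multiset.map (fun j => -1 / (starRingEnd ℂ) (b j)) Finset.univ.val ∧
    Even M ∧ Even N := by
  -- Step A: pointwise polynomial identity for good w
  have hptwise : ∀ w : ℂ, w ≠ 0 → (∀ j, w ≠ (starRingEnd ℂ) (b j)) →
      (∀ j, w ≠ -1/(b j)) →
      c * (-1)^(m+3+M+N) * (∏ j, a j) * w^(2*m+2+N) * (∏ j, (w - (-1/(a j)))) * (∏ j, (w - (starRingEnd ℂ) (b j)))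
        = -((starRingEnd ℂ) c) * (∏ j, b j) * w^M * (∏ j, (w - (starRingEnd ℂ) (a j))) * (∏ j, (w - (-1/(b j)))) := by
    intro w hw hw2 hw3
    apply key m M N c a b ha hb w hw hw2 hw3
    have hz : (starRingEnd ℂ) w ≠ 0 := by simpa using hw
    have hz2 : ∀ j, (starRingEnd ℂ) w ≠ b j := by
      intro j h
      exact hw2 j (by rw [← h, Complex.conj_conj])
    have hz3 : ∀ j, -1 / (starRingEnd ℂ) ((starRingEnd ℂ) w) ≠ b j := by
      intro j h
      rw [Complex.conj_conj] at h
      apply hw3 j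
      have h' : (-1 : ℂ) = b j * w := (div_eq_iff hw).mp h
      rw [eq_div_iff (hb j)]
      linear_combination -h'
    have h := heq ((starRingEnd ℂ) w) hz hz2 hz3
    rw [Complex.conj_conj] at h
    rw [hf, hf] at h
    simp only [map_mul, map_div₀, map_inv₀, map_pow, map_prod, map_sub,
      Complex.conj_conj] at h
    convert h using 2
  -- Step B: the two polynomials agree
  set k1 : ℂ := c * (-1)^(m+3+M+N) * ∏ j, a j with hk1def
  set k2 : ℂ := -((starRingEnd ℂ) c) * ∏ j, b j with hk2def
  have hk1 : k1 ≠ 0 := by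
    refine mul_ne_zero (mul_ne_zero hc (pow_ne_zero _ (by norm_num))) ?_
    exact Finset.prod_ne_zero_iff.mpr fun j _ => ha j
  have hk2 : k2 ≠ 0 := by
    refine mul_ne_zero (neg_ne_zero.mpr (by simpa using hc)) ?_
    exact Finset.prod_ne_zero_iff.mpr fun j _ => hb j
  set pA : ℂ[X] := ∏ j, (X - C (-1/(a j))) with hpAdef
  set pB : ℂ[X] := ∏ j, (X - C ((starRingEnd ℂ) (b j))) with hpBdef
  set qA : ℂ[X] := ∏ j, (X - C ((starRingEnd ℂ) (a j))) with hqAdef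
  set qB : ℂ[X] := ∏ j, (X - C (-1/(b j))) with hqBdef
  set P : ℂ[X] := C k1 * (X^(2*m+2+N) * (pA * pB)) with hPdef
  set Q : ℂ[X] := C k2 * (X^M * (qA * qB)) with hQdef
  have hmpA : pA.Monic := monic_prod_of_monic _ _ fun j _ => monic_X_sub_C _
  have hmpB : pB.Monic := monic_prod_of_monic _ _ fun j _ => monic_X_sub_C _
  have hmqA : qA.Monic := monic_prod_of_monic _ _ fun j _ => monic_X_sub_C _
  have hmqB : qB.Monic := monic_prod_of_monic _ _ fun j _ => monic_X_sub_C _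
  have hPQ : P = Q := by
    rw [← sub_eq_zero]
    apply Polynomial.eq_zero_of_infinite_isRoot
    have hbad : ({0} ∪ (Set.range fun j => (starRingEnd ℂ) (b j))
        ∪ (Set.range fun j => -1/(b j)) : Set ℂ).Finite := by
      refine (Set.finite_singleton 0).union (Set.finite_range _) |>.union (Set.finite_range _)
    refine Set.Infinite.mono ?_ hbad.infinite_compl
    intro w hwc
    simp only [Set.mem_compl_iff, Set.mem_union, Set.mem_singleton_iff,
      Set.mem_range, not_or, not_exists] at hwc
    obtain ⟨⟨hw, hw2⟩, hw3⟩ := hwc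
    have := hptwise w hw (fun j h => hw2 j h.symm) (fun j h => hw3 j h.symm)
    simp only [Set.mem_setOf_eq, IsRoot, eval_sub, hPdef, hQdef, eval_mul, eval_pow,
      eval_C, eval_X, hpAdef, hpBdef, hqAdef, hqBdef, eval_prod, eval_sub, sub_eq_zero]
    calc (k1 * (w ^ (2*m+2+N) * ((∏ j, (w - (-1/(a j)))) * (∏ j, (w - (starRingEnd ℂ) (b j))))))
        = c * (-1)^(m+3+M+N) * (∏ j, a j) * w^(2*m+2+N) * (∏ j, (w - (-1/(a j)))) * (∏ j, (w - (starRingEnd ℂ) (b j))) := by ring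
      _ = -((starRingEnd ℂ) c) * (∏ j, b j) * w^M * (∏ j, (w - (starRingEnd ℂ) (a j))) * (∏ j, (w - (-1/(b j)))) := this
      _ = k2 * (w ^ M * ((∏ j, (w - (starRingEnd ℂ) (a j))) * (∏ j, (w - (-1/(b j)))))) := by ring
  -- Step C: roots
  have hProots : P.roots = (2*m+2+N) • ({0} : Multiset ℂ)
      + (Multiset.map (fun j => -1/(a j)) Finset.univ.val
        + Multiset.map (fun j => (starRingEnd ℂ) (b j)) Finset.univ.val) := by
    rw [hPdef, roots_C_mul _ hk1,
      roots_mul (mul_ne_zero (pow_ne_zero _ X_ne_zero) (mul_ne_zero hmpA.ne_zero hmpB.ne_zero)),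
      roots_mul (mul_ne_zero hmpA.ne_zero hmpB.ne_zero),
      roots_pow, roots_X, hpAdef, hpBdef, roots_prod_fin, roots_prod_fin]
  have hQroots : Q.roots = M • ({0} : Multiset ℂ)
      + (Multiset.map (fun j => (starRingEnd ℂ) (a j)) Finset.univ.val
        + Multiset.map (fun j => -1/(b j)) Finset.univ.val) := by
    rw [hQdef, roots_C_mul _ hk2,
      roots_mul (mul_ne_zero (pow_ne_zero _ X_ne_zero) (mul_ne_zero hmqA.ne_zero hmqB.ne_zero)),
      roots_mul (mul_ne_zero hmqA.ne_zero hmqB.ne_zero),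
      roots_pow, roots_X, hqAdef, hqBdef, roots_prod_fin, roots_prod_fin]
  -- Step D: multiset combinatorics
  set A' : Multiset ℂ := Multiset.map (fun j => -1/(a j)) Finset.univ.val with hA'def
  set Abar : Multiset ℂ := Multiset.map (fun j => (starRingEnd ℂ) (a j)) Finset.univ.val with hAbardef
  set B' : Multiset ℂ := Multiset.map (fun j => -1/(b j)) Finset.univ.val with hB'def
  set Bbar : Multiset ℂ := Multiset.map (fun j => (starRingEnd ℂ) (b j)) Finset.univ.val with hBbardef
  have hzA' : (0 : ℂ) ∉ A' := by
    rw [hA'def]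
    intro hmem
    rw [Multiset.mem_map] at hmem
    obtain ⟨j, -, hj⟩ := hmem
    exact div_ne_zero (by norm_num : (-1 : ℂ) ≠ 0) (ha j) hj
  have hzB' : (0 : ℂ) ∉ B' := by
    rw [hB'def]
    intro hmem
    rw [Multiset.mem_map] at hmem
    obtain ⟨j, -, hj⟩ := hmem
    exact div_ne_zero (by norm_num : (-1 : ℂ) ≠ 0) (hb j) hj
  have hzAbar : (0 : ℂ) ∉ Abar := by
    simp only [hAbardef, Multiset.mem_map, not_exists]
    rintro j ⟨_, hj⟩
    exact ha j (by simpa using hj)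
  have hzBbar : (0 : ℂ) ∉ Bbar := by
    simp only [hBbardef, Multiset.mem_map, not_exists]
    rintro j ⟨_, hj⟩
    exact hb j (by simpa using hj)
  have hsum : A' + Bbar = Abar + B' := by
    have h : P.roots = Q.roots := by rw [hPQ]
    rw [hProots, hQroots] at h
    ext x
    by_cases hx : x = 0
    · subst hx
      rw [Multiset.count_add, Multiset.count_add,
        Multiset.count_eq_zero_of_notMem hzA', Multiset.count_eq_zero_of_notMem hzBbar,
        Multiset.count_eq_zero_of_notMem hzAbar, Multiset.count_eq_zero_of_notMem hzB']
    · have := congrArg (Multiset.count x) h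
      simp only [Multiset.count_add, Multiset.count_nsmul, Multiset.count_singleton,
        if_neg hx, mul_zero, zero_add] at this
      simpa [Multiset.count_add] using this
  have hdisj1 : ∀ x : ℂ, x ∈ A' → x ∈ B' → False := by
    intro x hxA hxB
    rw [hA'def, Multiset.mem_map] at hxA
    rw [hB'def, Multiset.mem_map] at hxB
    obtain ⟨j, _, hj⟩ := hxA
    obtain ⟨k, _, hk⟩ := hxB
    apply hdisj j k
    have : -1 / a j = -1 / b k := by rw [hj, hk]
    rw [neg_div, neg_div, neg_inj, one_div, one_div] at this
    exact inv_injective this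
  have hdisj2 : ∀ x : ℂ, x ∈ Abar → x ∈ Bbar → False := by
    intro x hxA hxB
    rw [hAbardef, Multiset.mem_map] at hxA
    rw [hBbardef, Multiset.mem_map] at hxB
    obtain ⟨j, _, hj⟩ := hxA
    obtain ⟨k, _, hk⟩ := hxB
    apply hdisj j k
    have : (starRingEnd ℂ) (a j) = (starRingEnd ℂ) (b k) := by rw [hj, hk]
    exact (starRingEnd ℂ).injective this
  have hAA : A' = Abar := by
    ext x
    have hcnt := congrArg (Multiset.count x) hsum
    simp only [Multiset.count_add] at hcnt
    have h1 : 0 < Multiset.count x A' → Multiset.count x B' = 0 := by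
      intro h
      rw [Multiset.count_eq_zero]
      exact fun hx => hdisj1 x (Multiset.count_pos.mp h) hx
    have h2 : 0 < Multiset.count x Abar → Multiset.count x Bbar = 0 := by
      intro h
      rw [Multiset.count_eq_zero]
      exact fun hx => hdisj2 x (Multiset.count_pos.mp h) hx
    omega
  have hBB : Bbar = B' := by
    rw [hAA] at hsum
    exact add_left_cancel hsum
  -- Step E: conclude
  have goal1 : Multiset.map a Finset.univ.val =
      Multiset.map (fun j => -1 / (starRingEnd ℂ) (a j)) Finset.univ.val := by
    have := congrArg (Multiset.map (starRingEnd ℂ)) hAA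
    rw [hA'def, hAbardef, Multiset.map_map, Multiset.map_map] at this
    simp only [Function.comp, map_div₀, map_neg, map_one, Complex.conj_conj] at this
    exact this.symm
  have goal2 : Multiset.map b Finset.univ.val =
      Multiset.map (fun j => -1 / (starRingEnd ℂ) (b j)) Finset.univ.val := by
    have := congrArg (Multiset.map (starRingEnd ℂ)) hBB
    rw [hB'def, hBbardef, Multiset.map_map, Multiset.map_map] at this
    simp only [Function.comp, map_div₀, map_neg, map_one, Complex.conj_conj] at this
    exact this
  refine ⟨goal1, goal2, ?_, ?_⟩
  · apply even_card_of_invariant sigma_involutive M (Multiset.map a Finset.univ.val)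
    · simp
    · rw [Multiset.map_map]
      exact goal1
    · intro x hx
      rw [Multiset.mem_map] at hx
      obtain ⟨j, _, hj⟩ := hx
      intro hfix
      have hx0 : x ≠ 0 := hj ▸ ha j
      have hcx : (starRingEnd ℂ) x ≠ 0 := by simpa using hx0
      have : x * (starRingEnd ℂ) x = -1 := by
        field_simp at hfix
        linear_combination -hfix
      rw [Complex.mul_conj] at this
      have him := congrArg Complex.re this
      simp at him
      nlinarith [Complex.normSq_nonneg x]
  · apply even_card_of_invariant sigma_involutive N (Multiset.map b Finset.univ.val)
    · simp
    · rw [Multiset.map_map]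
      exact goal2
    · intro x hx
      rw [Multiset.mem_map] at hx
      obtain ⟨j, _, hj⟩ := hx
      intro hfix
      have hx0 : x ≠ 0 := hj ▸ hb j
      have hcx : (starRingEnd ℂ) x ≠ 0 := by simpa using hx0
      have : x * (starRingEnd ℂ) x = -1 := by
        field_simp at hfix
        linear_combination -hfix
      rw [Complex.mul_conj] at this
      have him := congrArg Complex.re this
      simp at him
      nlinarith [Complex.normSq_nonneg x]
end

section
/- Let m ∈ ℕ with m ≥ 1, let a_j = e^{iπ(j-1)/(m+1)} for j = 1,…,m+1, let c = i^{m-1}, and let A₀,…,A_{2m+2} denote the coefficients of P(z) = ∏_{j=1}^{m+1}(z - a_j)(z + 1/conj(a_j)). Then |c| = 1 and the list (c, a₁, …, a_{m+1}) is a solution of the period problem with complexity m: conj(c·A_m) = -c·A_{m+2}, Im(c·A_{m+1}) = 0, and -conj(c)/c = ∏_{j=1}^{m+1} a_j/conj(a_j). (In fact A_m = A_{m+1} = A_{m+2} = 0.) -/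
open Polynomial

/-- For `a_j = e^{iπ(j-1)/(m+1)}`, `j = 1,…,m+1` (reindexed as `j = 0,…,m`), and
`c = i^{m-1}`, the list `(c, a₁, …, a_{m+1})` is a solution of the period problem with
complexity `m`: `|c| = 1`, `conj(c·A_m) = -c·A_{m+2}`, `Im(c·A_{m+1}) = 0` and
`-conj(c)/c = ∏ a_j/conj(a_j)`, where `A_h` are the coefficients of
`P(z) = ∏_j (z - a_j)(z + 1/conj(a_j))`. In fact `A_m = A_{m+1} = A_{m+2} = 0`. -/
theorem most_symmetric_solution_period_problem (m : ℕ) (hm : 1 ≤ m)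
    (a : ℕ → ℂ)
    (ha : ∀ j, a j = Complex.exp (Real.pi * Complex.I * j / (m + 1)))
    (c : ℂ) (hc : c = Complex.I ^ (m - 1))
    (P : Polynomial ℂ)
    (hP : P = ∏ j ∈ Finset.range (m + 1),
      ((X - C (a j)) * (X + C (1 / (starRingEnd ℂ) (a j))))) :
    ‖c‖ = 1 ∧
    (starRingEnd ℂ) (c * P.coeff m) = -(c * P.coeff (m + 2)) ∧
    (c * P.coeff (m + 1)).im = 0 ∧
    -((starRingEnd ℂ) c) / c =
      ∏ j ∈ Finset.range (m + 1), (a j / (starRingEnd ℂ) (a j)) ∧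
    P.coeff m = 0 ∧ P.coeff (m + 1) = 0 ∧ P.coeff (m + 2) = 0 := by
  have hm1 : ((m : ℂ) + 1) ≠ 0 := by
    exact_mod_cast (Nat.cast_add_one_ne_zero m : ((m:ℂ)+1) ≠ 0)
  set ζ : ℂ := Complex.exp (2 * Real.pi * Complex.I / (m + 1)) with hζdef
  have hζ : IsPrimitiveRoot ζ (m + 1) := by
    have := Complex.isPrimitiveRoot_exp (m + 1) (Nat.succ_ne_zero m)
    convert this using 2
    push_cast
    ring
  -- a j is nonzero and conj (a j) = (a j)⁻¹
  have hane : ∀ j, a j ≠ 0 := fun j => by rw [ha]; exact Complex.exp_ne_zero _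
  have hconj : ∀ j : ℕ, (starRingEnd ℂ) (a j) = (a j)⁻¹ := by
    intro j
    rw [ha, ← Complex.exp_conj, ← Complex.exp_neg]
    congr 1
    simp [Complex.conj_I]
    ring
  have hsq : ∀ j : ℕ, (a j) ^ 2 = ζ ^ j := by
    intro j
    rw [ha, hζdef, ← Complex.exp_nat_mul, ← Complex.exp_nat_mul]
    congr 1
    field_simp
    ring
  -- P = X^(2(m+1)) - 1
  have hfact : (X : ℂ[X]) ^ (m + 1) - 1 = ∏ j ∈ Finset.range (m + 1), (X - C (ζ ^ j)) := by
    have := X_pow_sub_C_eq_prod hζ (Nat.succ_pos m) (one_pow (m + 1))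
    simpa using this
  have hPeq : P = (X : ℂ[X]) ^ (2 * (m + 1)) - 1 := by
    rw [hP]
    have h1 : ∀ j ∈ Finset.range (m + 1),
        (X - C (a j)) * (X + C (1 / (starRingEnd ℂ) (a j))) = X ^ 2 - C (ζ ^ j) := by
      intro j _
      rw [hconj, one_div, inv_inv, ← hsq]
      rw [map_pow]
      ring
    rw [Finset.prod_congr rfl h1]
    have h2 : ((X : ℂ[X]) ^ (m + 1) - 1).comp (X ^ 2) =
        (∏ j ∈ Finset.range (m + 1), ((X : ℂ[X]) - C (ζ ^ j))).comp (X ^ 2) := by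
      rw [hfact]
    rw [Polynomial.prod_comp] at h2
    simp only [sub_comp, pow_comp, X_comp, one_comp, C_comp] at h2
    rw [← h2, ← pow_mul]
  have hcoeff : ∀ k, k ≠ 0 → k ≠ 2 * (m + 1) → P.coeff k = 0 := by
    intro k hk0 hk2
    rw [hPeq]
    simp [coeff_X_pow, coeff_one, hk0, hk2, Ne.symm hk2]
  have hc0 : P.coeff m = 0 := hcoeff m (by omega) (by omega)
  have hc1 : P.coeff (m + 1) = 0 := hcoeff (m + 1) (by omega) (by omega)
  have hc2 : P.coeff (m + 2) = 0 := hcoeff (m + 2) (by omega) (by omega)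
  refine ⟨?_, ?_, ?_, ?_, hc0, hc1, hc2⟩
  · rw [hc, norm_pow, Complex.norm_I, one_pow]
  · rw [hc0, hc2]; simp
  · rw [hc1]; simp
  · -- -conj(c)/c = ∏ a_j / conj(a_j) = (-1)^m
    have hrhs : ∏ j ∈ Finset.range (m + 1), (a j / (starRingEnd ℂ) (a j)) = (-1 : ℂ) ^ m := by
      have : ∀ j ∈ Finset.range (m + 1), a j / (starRingEnd ℂ) (a j) = ζ ^ j := by
        intro j _
        rw [hconj, div_eq_mul_inv, inv_inv, ← hsq, sq]
      rw [Finset.prod_congr rfl this]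
      have hz : ∀ j ∈ Finset.range (m+1), ζ ^ j
          = Complex.exp ((j : ℂ) * (2 * Real.pi * Complex.I / (m + 1))) := by
        intro j _
        rw [hζdef, ← Complex.exp_nat_mul]
      rw [Finset.prod_congr rfl hz, ← Complex.exp_sum, ← Finset.sum_mul]
      have hsum : (∑ j ∈ Finset.range (m + 1), (j : ℂ)) * 2 = (m + 1) * m := by
        have hn : (∑ j ∈ Finset.range (m + 1), j) * 2 = (m + 1) * m := by
          rw [Finset.sum_range_id_mul_two (m + 1)]; simp
        have := congrArg (Nat.cast : ℕ → ℂ) hn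
        push_cast at this
        exact this
      have harg : (∑ j ∈ Finset.range (m + 1), (j : ℂ)) * (2 * Real.pi * Complex.I / (m + 1))
          = (m : ℂ) * (Real.pi * Complex.I) := by
        field_simp
        linear_combination hsum
      rw [harg, Complex.exp_nat_mul, Complex.exp_pi_mul_I]
    rw [hrhs, hc, map_pow, Complex.conj_I]
    have hI : (Complex.I : ℂ) ^ (m - 1) ≠ 0 := pow_ne_zero _ Complex.I_ne_zero
    have hmm : ((-1 : ℂ)) ^ m = -((-1 : ℂ)) ^ (m - 1) := by
      conv_lhs => rw [show m = (m - 1) + 1 from by omega]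
      rw [pow_succ]; ring
    rw [neg_pow, neg_div, mul_div_assoc, div_self hI, mul_one, hmm]
end

section
/- Let r₁, r₂ > 0 and θ₂, β ∈ ℝ, set c = e^{iβ}, a₁ = r₁, a₂ = r₂e^{iθ₂}, and let A₀,…,A₄ be the coefficients of the polynomial P(z) = (z - a₁)(z + 1/conj(a₁))(z - a₂)(z + 1/conj(a₂)). If conj(c·A₁) = -c·A₃, Im(c·A₂) = 0, and e^{2i(β+θ₂)} = -1, then r₁ = 1, r₂ = 1, e^{iθ₂} ∈ {i, -i}, and c ∈ {1, -1}. (Hence the Henneberg surface H₁ is the only surface with complexity m = 1 that solves the period problem and descends to a 1-sided quotient, after normalizing a₁ to be real and positive.) -/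
open Polynomial

lemma expand4 (b1 b2 b3 b4 : ℂ) :
    (X + C b1) * (X + C b2) * (X + C b3) * (X + C b4) =
      X ^ 4 + C (b1 + b2 + b3 + b4) * X ^ 3 +
        C (b1*b2 + b1*b3 + b1*b4 + b2*b3 + b2*b4 + b3*b4) * X ^ 2 +
        C (b1*b2*b3 + b1*b2*b4 + b1*b3*b4 + b2*b3*b4) * X + C (b1*b2*b3*b4) := by
  simp only [map_add, map_mul]
  ring

lemma coeff4 (b1 b2 b3 b4 : ℂ) :
    ((X + C b1) * (X + C b2) * (X + C b3) * (X + C b4)).coeff 1 =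
      b1*b2*b3 + b1*b2*b4 + b1*b3*b4 + b2*b3*b4 ∧
    ((X + C b1) * (X + C b2) * (X + C b3) * (X + C b4)).coeff 2 =
      b1*b2 + b1*b3 + b1*b4 + b2*b3 + b2*b4 + b3*b4 ∧
    ((X + C b1) * (X + C b2) * (X + C b3) * (X + C b4)).coeff 3 =
      b1 + b2 + b3 + b4 := by
  rw [expand4]
  refine ⟨?_, ?_, ?_⟩ <;> simp [coeff_X_pow, coeff_C, coeff_X, add_mul, coeff_C_mul, mul_assoc]

set_option maxHeartbeats 2000000 in
/-- uniqueness of the Henneberg surface for complexity `m = 1`: if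
`c = e^{iβ}`, `a₁ = r₁ > 0`, `a₂ = r₂e^{iθ₂}` with `r₂ > 0` satisfy
`conj(c·A₁) = -c·A₃`, `Im(c·A₂) = 0` and `e^{2i(β+θ₂)} = -1`, where `A_h` are the coefficients
of `P(z) = (z-a₁)(z+1/conj(a₁))(z-a₂)(z+1/conj(a₂))`, then `r₁ = r₂ = 1`,
`e^{iθ₂} = ±i` and `c = ±1`. -/
theorem henneberg_unique_complexity_one
    (r₁ r₂ : ℝ) (hr₁ : 0 < r₁) (hr₂ : 0 < r₂) (θ₂ β : ℝ)
    (c a₁ a₂ : ℂ)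
    (hc : c = Complex.exp (β * Complex.I))
    (ha₁ : a₁ = (r₁ : ℂ))
    (ha₂ : a₂ = (r₂ : ℂ) * Complex.exp (θ₂ * Complex.I))
    (P : Polynomial ℂ)
    (hP : P = (X - C a₁) * (X + C (1 / (starRingEnd ℂ) a₁)) *
      (X - C a₂) * (X + C (1 / (starRingEnd ℂ) a₂)))
    (h1 : (starRingEnd ℂ) (c * P.coeff 1) = -(c * P.coeff 3))
    (h2 : (c * P.coeff 2).im = 0)
    (h3 : Complex.exp (2 * (β + θ₂) * Complex.I) = -1) :
    r₁ = 1 ∧ r₂ = 1 ∧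
    (Complex.exp (θ₂ * Complex.I) = Complex.I ∨
      Complex.exp (θ₂ * Complex.I) = -Complex.I) ∧
    (c = 1 ∨ c = -1) := by
  set w : ℂ := Complex.exp (θ₂ * Complex.I) with hw
  have hc0 : c ≠ 0 := by rw [hc]; exact Complex.exp_ne_zero _
  have hw0 : w ≠ 0 := Complex.exp_ne_zero _
  have hr1c : (r₁ : ℂ) ≠ 0 := Complex.ofReal_ne_zero.mpr hr₁.ne'
  have hr2c : (r₂ : ℂ) ≠ 0 := Complex.ofReal_ne_zero.mpr hr₂.ne'
  have hci : c * c⁻¹ = 1 := mul_inv_cancel₀ hc0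
  have hwi : w * w⁻¹ = 1 := mul_inv_cancel₀ hw0
  have hr1i : (r₁ : ℂ) * (r₁ : ℂ)⁻¹ = 1 := mul_inv_cancel₀ hr1c
  have hr2i : (r₂ : ℂ) * (r₂ : ℂ)⁻¹ = 1 := mul_inv_cancel₀ hr2c
  have hconjc : (starRingEnd ℂ) c = c⁻¹ := by
    rw [hc, ← Complex.exp_conj, ← Complex.exp_neg]
    congr 1
    simp [map_mul, Complex.conj_ofReal, Complex.conj_I]
  have hconjw : (starRingEnd ℂ) w = w⁻¹ := by
    rw [hw, ← Complex.exp_conj, ← Complex.exp_neg]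
    congr 1
    simp [map_mul, Complex.conj_ofReal, Complex.conj_I]
  have hcw : c ^ 2 * w ^ 2 = -1 := by
    have e : (2 * ((β : ℂ) + (θ₂ : ℂ))) * Complex.I =
        ((β : ℂ) * Complex.I + (θ₂ : ℂ) * Complex.I) +
        ((β : ℂ) * Complex.I + (θ₂ : ℂ) * Complex.I) := by ring
    rw [show ((2 : ℂ) * (↑β + ↑θ₂) * Complex.I) = (2 * ((β : ℂ) + (θ₂ : ℂ))) * Complex.I by ring,
      e, Complex.exp_add, Complex.exp_add] at h3
    rw [hc]
    linear_combination h3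
  -- rewrite P and extract coefficients
  have hca₁ : (starRingEnd ℂ) a₁ = (r₁ : ℂ) := by rw [ha₁, Complex.conj_ofReal]
  have hca₂ : (starRingEnd ℂ) a₂ = (r₂ : ℂ) * w⁻¹ := by
    rw [ha₂, map_mul, Complex.conj_ofReal, hconjw]
  have hinv2 : (1 : ℂ) / ((r₂ : ℂ) * w⁻¹) = w / (r₂ : ℂ) := by
    field_simp
  have hPc : P = (X + C (-(r₁ : ℂ))) * (X + C (1 / (r₁ : ℂ))) *
      (X + C (-((r₂ : ℂ) * w))) * (X + C (w / (r₂ : ℂ))) := by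
    rw [hP, hca₁, hca₂, ha₁, ha₂, hinv2, sub_eq_add_neg, sub_eq_add_neg, ← C_neg, ← C_neg]
  obtain ⟨e1, e2, e3⟩ := coeff4 (-(r₁ : ℂ)) (1 / (r₁ : ℂ)) (-((r₂ : ℂ) * w)) (w / (r₂ : ℂ))
  rw [← hPc] at e1 e2 e3
  rw [e1, e3] at h1
  rw [e2] at h2
  have h2' := (Complex.conj_eq_iff_im (z := c * (-(r₁:ℂ) * (1/(r₁:ℂ)) + -(r₁:ℂ) * (-((r₂:ℂ)*w)) +
      -(r₁:ℂ) * (w/(r₂:ℂ)) + 1/(r₁:ℂ) * (-((r₂:ℂ)*w)) + 1/(r₁:ℂ) * (w/(r₂:ℂ)) +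
      -((r₂:ℂ)*w) * (w/(r₂:ℂ))))).mpr h2
  simp only [map_mul, map_add, map_neg, map_div₀, map_one, Complex.conj_ofReal,
    hconjc, hconjw] at h1 h2'
  ring_nf at h1 h2'
  -- the first period condition gives (1-r₁²)r₂ + (1-r₂²)r₁w = 0
  have key : (1 - (r₁:ℂ)^2) * (r₂:ℂ) + (1 - (r₂:ℂ)^2) * (r₁:ℂ) * w = 0 := by
    linear_combination (-(1/2:ℂ)*c*w^2*(r₁:ℂ)*(r₂:ℂ))*h1 + ((1/2:ℂ)*((r₂:ℂ) + (-1)*(r₁:ℂ)^2*(r₂:ℂ) + w*(r₁:ℂ) + (-1)*w*(r₁:ℂ)*(r₂:ℂ)^2))*hcw - ((1/2:ℂ)*(w^2*w⁻¹*(r₁:ℂ)^2*(r₁:ℂ)⁻¹*(r₂:ℂ)*(r₂:ℂ)⁻¹ + (-1)*w^2*w⁻¹*(r₁:ℂ)^2*(r₁:ℂ)⁻¹*(r₂:ℂ)^2 + w^2*w⁻¹^2*(r₁:ℂ)*(r₁:ℂ)⁻¹*(r₂:ℂ)^2*(r₂:ℂ)⁻¹ + (-1)*w^2*w⁻¹^2*(r₁:ℂ)^2*(r₂:ℂ)^2*(r₂:ℂ)⁻¹))*hci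 - ((1/2:ℂ)*((r₁:ℂ)*(r₁:ℂ)⁻¹*(r₂:ℂ)^2*(r₂:ℂ)⁻¹ + (-1)*(r₁:ℂ)^2*(r₂:ℂ)^2*(r₂:ℂ)⁻¹ + w*(r₁:ℂ)^2*(r₁:ℂ)⁻¹*(r₂:ℂ)*(r₂:ℂ)⁻¹ + (-1)*w*(r₁:ℂ)^2*(r₁:ℂ)⁻¹*(r₂:ℂ)^2 + w*w⁻¹*(r₁:ℂ)*(r₁:ℂ)⁻¹*(r₂:ℂ)^2*(r₂:ℂ)⁻¹ + (-1)*w*w⁻¹*(r₁:ℂ)^2*(r₂:ℂ)^2*(r₂:ℂ)⁻¹))*hwi - ((1/2:ℂ)*((r₂:ℂ)^2*(r₂:ℂ)⁻¹ + w*(r₁:ℂ)*(r₂:ℂ)*(r₂:ℂ)⁻¹ + (-1)*w*(r₁:ℂ)*(r₂:ℂ)^2 + (-1)*c^2*w^2*(r₂:ℂ)))*hr1i - ((1/2:ℂ)*((r₂:ℂ) + (-1)*(r₁:ℂ)^2*(r₂:ℂ) + w*(r₁:ℂ) + (-1)*c^2*w^3*(r₁:ℂ)))*hr2i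
  -- the second period condition gives r₁r₂(1+w²) = (r₁²-1)(r₂²-1)w
  have hS : (r₁:ℂ)*(r₂:ℂ)*(1 + w^2) = ((r₁:ℂ)^2*(r₂:ℂ)^2 - (r₁:ℂ)^2 - (r₂:ℂ)^2 + 1)*w := by
    linear_combination (-(1/2:ℂ)*c*w^2*(r₁:ℂ)*(r₂:ℂ))*h2' + ((1/2:ℂ)*((r₁:ℂ)*(r₂:ℂ) + (-1)*w + w*(r₂:ℂ)^2 + w*(r₁:ℂ)^2 + (-1)*w*(r₁:ℂ)^2*(r₂:ℂ)^2 + w^2*(r₁:ℂ)*(r₂:ℂ)))*hcw + ((1/2:ℂ)*((-1)*w^2*(r₁:ℂ)^2*(r₁:ℂ)⁻¹*(r₂:ℂ) + w^2*w⁻¹*(r₁:ℂ)*(r₁:ℂ)⁻¹*(r₂:ℂ)*(r₂:ℂ)⁻¹ + (-1)*w^2*w⁻¹*(r₁:ℂ)*(r₁:ℂ)⁻¹*(r₂:ℂ)^2 + (-1)*w^2*w⁻¹*(r₁:ℂ)^2*(r₂:ℂ)*(r₂:ℂ)⁻¹ + w^2*w⁻¹*(r₁:ℂ)^2*(r₂:ℂ)^2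 + (-1)*w^2*w⁻¹^2*(r₁:ℂ)*(r₂:ℂ)^2*(r₂:ℂ)⁻¹))*hci + ((1/2:ℂ)*((-1)*(r₁:ℂ)*(r₂:ℂ)^2*(r₂:ℂ)⁻¹ + w*(r₁:ℂ)*(r₁:ℂ)⁻¹*(r₂:ℂ)*(r₂:ℂ)⁻¹ + (-1)*w*(r₁:ℂ)*(r₁:ℂ)⁻¹*(r₂:ℂ)^2 + (-1)*w*(r₁:ℂ)^2*(r₂:ℂ)*(r₂:ℂ)⁻¹ + w*(r₁:ℂ)^2*(r₂:ℂ)^2 + (-1)*w*w⁻¹*(r₁:ℂ)*(r₂:ℂ)^2*(r₂:ℂ)⁻¹))*hwi + ((1/2:ℂ)*(w*(r₂:ℂ)*(r₂:ℂ)⁻¹ + (-1)*w*(r₂:ℂ)^2 + (-1)*w^2*(r₁:ℂ)*(r₂:ℂ) + c^2*w^2*(r₁:ℂ)*(r₂:ℂ) + (-1)*c^2*w^3*(r₂:ℂ)*(r₂:ℂ)⁻¹ + c^2*w^3*(r₂:ℂ)^2))*hr1i + ((1/2:ℂ)*((-1)*(r₁:ℂ)*(r₂:ℂ) + w + (-1)*w*(r₁:ℂ)^2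 + (-1)*c^2*w^3 + c^2*w^4*(r₁:ℂ)*(r₂:ℂ) + c^2*w^3*(r₁:ℂ)^2))*hr2i
  have key2 : ((((1-r₁^2)*r₂ : ℝ)) : ℂ) + (((1-r₂^2)*r₁ : ℝ) : ℂ) * w = 0 := by
    push_cast
    linear_combination key
  by_cases hwim : w.im = 0
  · -- w real: contradiction
    exfalso
    have hcjw : (starRingEnd ℂ) w = w := Complex.conj_eq_iff_im.mpr hwim
    have e : w⁻¹ = w := hconjw.symm.trans hcjw
    have hw2 : w ^ 2 = 1 := by
      have h := mul_inv_cancel₀ hw0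
      rw [e] at h
      linear_combination h
    have G : ((-2*(r₁^2*r₂^2) - ((1-r₂^2)*r₁)^2 : ℝ) : ℂ) = 0 := by
      push_cast
      linear_combination (-(r₁:ℂ)*(r₂:ℂ))*hS + ((r₁:ℂ)^2*(r₂:ℂ)^2 + ((1-(r₂:ℂ)^2)*(r₁:ℂ))^2)*hw2 - ((1-(r₂:ℂ)^2)*(r₁:ℂ)*w)*key
    have GR : (-2*(r₁^2*r₂^2) - ((1-r₂^2)*r₁)^2 : ℝ) = 0 := by exact_mod_cast G
    nlinarith [sq_nonneg ((1-r₂^2)*r₁), mul_pos (mul_pos hr₁ hr₁) (mul_pos hr₂ hr₂)]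
  · -- w non-real: the Henneberg case
    have him : ((1-r₂^2)*r₁) * w.im = 0 := by
      simpa [← Complex.ofReal_pow] using congrArg Complex.im key2
    have hre : ((1-r₁^2)*r₂) + ((1-r₂^2)*r₁) * w.re = 0 := by
      simpa [← Complex.ofReal_pow] using congrArg Complex.re key2
    have hv : ((1-r₂^2)*r₁) = 0 := (mul_eq_zero.mp him).resolve_right hwim
    have hr2e : r₂ = 1 := by
      have h0 : 1 - r₂^2 = 0 := (mul_eq_zero.mp hv).resolve_right hr₁.ne'
      have h1' : (r₂ - 1) * (r₂ + 1) = 0 := by linear_combination -h0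
      rcases mul_eq_zero.mp h1' with h | h
      · linarith
      · linarith
    have hr1e : r₁ = 1 := by
      have h0 : (1 - r₁^2) * r₂ = 0 := by rw [hv] at hre; linarith
      have h0' : 1 - r₁^2 = 0 := (mul_eq_zero.mp h0).resolve_right hr₂.ne'
      have h1' : (r₁ - 1) * (r₁ + 1) = 0 := by linear_combination -h0'
      rcases mul_eq_zero.mp h1' with h | h
      · linarith
      · linarith
    have hw2 : w ^ 2 = -1 := by
      rw [hr1e, hr2e] at hS
      push_cast at hS
      linear_combination hS
    have hc2 : c ^ 2 = 1 := by
      linear_combination c^2 * hw2 - hcw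
    have hwc : w = Complex.I ∨ w = -Complex.I := by
      have h : (w - Complex.I) * (w + Complex.I) = 0 := by
        linear_combination hw2 - Complex.I_sq
      rcases mul_eq_zero.mp h with h | h
      · exact Or.inl (sub_eq_zero.mp h)
      · exact Or.inr (eq_neg_of_add_eq_zero_left h)
    have hcc : c = 1 ∨ c = -1 := by
      have h : (c - 1) * (c + 1) = 0 := by linear_combination hc2
      rcases mul_eq_zero.mp h with h | h
      · exact Or.inl (sub_eq_zero.mp h)
      · exact Or.inr (eq_neg_of_add_eq_zero_left h)
    exact ⟨hr1e, hr2e, hwc, hcc⟩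
end

section
/- Let r₁, r₂ > 0 and θ₂, β ∈ ℝ, set c = e^{iβ}, and let A₁, A₃ be the coefficients of z and z³ in the polynomial P(z) = (z - r₁)(z + 1/r₁)(z - r₂e^{iθ₂})(z + e^{iθ₂}/r₂). Then, writing R(r) = r - 1/r, one has conj(c·A₁) + c·A₃ = -2i·[R(r₁)·e^{-iθ₂} + R(r₂)]·sin(β + θ₂). -/
open Polynomial

/-- `R(r) = r - 1/r`. -/
noncomputable def RR (r : ℝ) : ℝ := r - 1 / r

lemma quartic_expand (a a' b b' : ℂ) :
    (X - C a) * (X + C a') * (X - C b) * (X + C b') =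
      X ^ 4 + C (a' - a + b' - b) * X ^ 3 +
        C (-(a * a') - b * b' + (a' - a) * (b' - b)) * X ^ 2 +
        C (-(a' - a) * (b * b') - (b' - b) * (a * a')) * X +
        C (a * a' * (b * b')) := by
  simp only [C_sub, C_add, C_mul, C_neg]
  ring

/-- with `c = e^{iβ}` and `A₁, A₃` the coefficients of `z` and `z³` in
`P(z) = (z - r₁)(z + 1/r₁)(z - r₂e^{iθ₂})(z + e^{iθ₂}/r₂)`, one has
`conj(c·A₁) + c·A₃ = -2i·[R(r₁)e^{-iθ₂} + R(r₂)]·sin(β + θ₂)`, where `R(r) = r - 1/r`. -/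
theorem first_period_identity_complexity_one
    (r₁ r₂ : ℝ) (hr₁ : 0 < r₁) (hr₂ : 0 < r₂) (θ₂ β : ℝ)
    (c : ℂ) (hc : c = Complex.exp (β * Complex.I))
    (P : Polynomial ℂ)
    (hP : P = (X - C (r₁ : ℂ)) * (X + C (1 / (r₁ : ℂ))) *
      (X - C ((r₂ : ℂ) * Complex.exp (θ₂ * Complex.I))) *
      (X + C (Complex.exp (θ₂ * Complex.I) / (r₂ : ℂ)))) :
    (starRingEnd ℂ) (c * P.coeff 1) + c * P.coeff 3 =
      -2 * Complex.I *
        ((RR r₁ : ℂ) * Complex.exp (-θ₂ * Complex.I) + (RR r₂ : ℂ)) *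
        (Real.sin (β + θ₂) : ℂ) := by
  have h1 : (r₁ : ℂ) ≠ 0 := by exact_mod_cast hr₁.ne'
  have h2 : (r₂ : ℂ) ≠ 0 := by exact_mod_cast hr₂.ne'
  set t := Complex.exp (θ₂ * Complex.I) with ht
  have ht0 : t ≠ 0 := Complex.exp_ne_zero _
  have hA3 : P.coeff 3 = -((RR r₁ : ℂ) + (RR r₂ : ℂ) * t) := by
    rw [hP, quartic_expand]
    simp only [coeff_add, coeff_C_mul, coeff_X_pow, coeff_X, coeff_C]
    norm_num
    simp only [RR, Complex.ofReal_sub, Complex.ofReal_div, Complex.ofReal_one]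
    try field_simp
    try ring
  have hA1 : P.coeff 1 = (RR r₁ : ℂ) * t ^ 2 + (RR r₂ : ℂ) * t := by
    rw [hP, quartic_expand]
    simp only [coeff_add, coeff_C_mul, coeff_X_pow, coeff_X, coeff_C]
    norm_num
    simp only [RR, Complex.ofReal_sub, Complex.ofReal_div, Complex.ofReal_one]
    try field_simp
    try ring
  rw [hA1, hA3, hc]
  -- rewrite everything in terms of exponentials
  have hconjc : (starRingEnd ℂ) (Complex.exp (β * Complex.I)) = Complex.exp (-β * Complex.I) := by
    rw [← Complex.exp_conj]; congr 1
    simp [Complex.conj_I, mul_comm]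
  have hconjt : (starRingEnd ℂ) t = Complex.exp (-θ₂ * Complex.I) := by
    rw [ht, ← Complex.exp_conj]; congr 1
    simp [Complex.conj_I, mul_comm]
  have hsin : (Real.sin (β + θ₂) : ℂ) =
      (Complex.exp (-(β + θ₂) * Complex.I) - Complex.exp ((β + θ₂) * Complex.I)) * Complex.I / 2 := by
    rw [Complex.ofReal_sin, Complex.sin]
    push_cast
    ring
  rw [hsin]
  have e1 : Complex.exp (-(β + θ₂) * Complex.I) =
      Complex.exp (-β * Complex.I) * Complex.exp (-θ₂ * Complex.I) := by
    rw [← Complex.exp_add]; ring_nf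
  have e2 : Complex.exp ((β + θ₂) * Complex.I) =
      Complex.exp (β * Complex.I) * t := by
    rw [ht, ← Complex.exp_add]; ring_nf
  have e3 : Complex.exp (-θ₂ * Complex.I) = t⁻¹ := by
    rw [ht, ← Complex.exp_neg]; ring_nf
  have e4 : Complex.exp (-β * Complex.I) = (Complex.exp (β * Complex.I))⁻¹ := by
    rw [← Complex.exp_neg]; ring_nf
  simp only [map_add, map_mul, map_pow, Complex.conj_ofReal, hconjc, hconjt, e1, e2, e3, e4]
  have hu : Complex.exp (β * Complex.I) ≠ 0 := Complex.exp_ne_zero _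
  field_simp
  ring_nf
  simp only [Complex.I_sq]
  ring
end

section
/- Let r₁, r₂, r₃ > 0 and θ₂, θ₃ ∈ ℝ, write R(r) = r - 1/r, and define F = (1 + e^{2iθ₂} + e^{2iθ₃}) - R(r₁)·(R(r₂)e^{iθ₂} + R(r₃)e^{iθ₃}) - R(r₂)R(r₃)e^{i(θ₂+θ₃)} and G = R(r₂)cos θ₃ + R(r₃)cos θ₂ + R(r₁)cos(θ₂ - θ₃) - (1/2)·R(r₁)R(r₂)R(r₃). If F = 0, G = 0, r₁ = 1, and at least one of r₂ = 1 or r₃ = 1 holds, then r₂ = r₃ = 1 and 1 + e^{2iθ₂} + e^{2iθ₃} = 0; consequently {e^{2iθ₂}, e^{2iθ₃}} = {e^{2πi/3}, e^{-2πi/3}}. -/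
lemma exp_two_mul_I' (x : ℝ) :
    Complex.exp (2 * x * Complex.I) =
      Complex.ofReal (Real.cos (2*x)) + Complex.ofReal (Real.sin (2*x)) * Complex.I := by
  rw [show (2 * (x:ℂ) * Complex.I) = ((2*x : ℝ) : ℂ) * Complex.I by push_cast; ring,
    Complex.exp_mul_I, Complex.ofReal_cos, Complex.ofReal_sin]

lemma sum_zero_analysis (x y : ℝ)
    (h : 1 + Complex.exp (2 * x * Complex.I) + Complex.exp (2 * y * Complex.I) = 0) :
    Real.cos (2*x) = -1/2 ∧ Real.cos (2*y) = -1/2 ∧ Real.sin (2*y) = -Real.sin (2*x) ∧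
      Real.sin (2*x)^2 = 3/4 := by
  rw [exp_two_mul_I', exp_two_mul_I'] at h
  rw [Complex.ext_iff] at h
  simp only [Complex.add_re, Complex.add_im, Complex.ofReal_re, Complex.ofReal_im,
    Complex.mul_re, Complex.mul_im, Complex.I_re, Complex.I_im, Complex.one_re,
    Complex.one_im, Complex.zero_re, Complex.zero_im] at h
  obtain ⟨hre, him⟩ := h
  simp only [mul_zero, mul_one, zero_mul, sub_zero, add_zero, zero_add] at hre him
  have p2 := Real.sin_sq_add_cos_sq (2*x)
  have p3 := Real.sin_sq_add_cos_sq (2*y)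
  have hs : Real.sin (2*y) = - Real.sin (2*x) := by linarith
  have hc : Real.cos (2*y) = -1 - Real.cos (2*x) := by linarith
  rw [hs, hc] at p3
  have hcx : Real.cos (2*x) = -1/2 := by nlinarith [p2, p3]
  refine ⟨hcx, by rw [hc, hcx]; norm_num, hs, by nlinarith [p2]⟩

lemma RR_one : RR 1 = 0 := by norm_num [RR]

lemma RR_eq_zero_iff {r : ℝ} (hr : 0 < r) (h : RR r = 0) : r = 1 := by
  unfold RR at h
  have hr' : r ≠ 0 := ne_of_gt hr
  field_simp at h
  nlinarith

lemma cos_ne_zero_of (θ : ℝ) (h : Real.cos (2*θ) = -1/2) : Real.cos θ ≠ 0 := by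
  intro h0
  rw [Real.cos_two_mul, h0] at h
  norm_num at h

lemma exp_third (s : ℝ) (hs : s = 1 ∨ s = -1) :
    Complex.exp (s * (2 * Real.pi * Complex.I / 3)) =
      Complex.ofReal (-1/2) + Complex.ofReal (s * (Real.sqrt 3 / 2)) * Complex.I := by
  have : (s : ℂ) * (2 * Real.pi * Complex.I / 3) = ((s * (2*Real.pi/3) : ℝ) : ℂ) * Complex.I := by
    push_cast; ring
  rw [this, Complex.exp_mul_I, ← Complex.ofReal_cos, ← Complex.ofReal_sin]
  have h23 : (2*Real.pi/3 : ℝ) = Real.pi - Real.pi/3 := by ring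
  rcases hs with h | h <;> subst h <;>
    simp [h23, Real.cos_pi_sub, Real.sin_pi_sub, Real.cos_pi_div_three, Real.sin_pi_div_three] <;> norm_num

lemma final_set (x y : ℝ)
    (h : 1 + Complex.exp (2 * x * Complex.I) + Complex.exp (2 * y * Complex.I) = 0) :
    ({Complex.exp (2 * x * Complex.I), Complex.exp (2 * y * Complex.I)} : Set ℂ) =
      {Complex.exp (2 * Real.pi * Complex.I / 3),
        Complex.exp (-(2 * Real.pi * Complex.I / 3))} := by
  obtain ⟨hc2, hc3, hs, hsq⟩ := sum_zero_analysis x y h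
  have e1 : Complex.exp (2 * Real.pi * Complex.I / 3) =
      Complex.ofReal (-1/2) + Complex.ofReal (Real.sqrt 3 / 2) * Complex.I := by
    have := exp_third 1 (Or.inl rfl)
    simpa using this
  have e2 : Complex.exp (-(2 * Real.pi * Complex.I / 3)) =
      Complex.ofReal (-1/2) + Complex.ofReal (-(Real.sqrt 3 / 2)) * Complex.I := by
    have := exp_third (-1) (Or.inr rfl)
    rw [show ((-1:ℝ):ℂ) * (2 * Real.pi * Complex.I / 3) = -(2 * Real.pi * Complex.I / 3) by
      push_cast; ring] at this
    rw [this]; norm_num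
  have h3 : Real.sqrt 3 ^ 2 = 3 := Real.sq_sqrt (by norm_num)
  have hcase : Real.sin (2*x) = Real.sqrt 3 / 2 ∨ Real.sin (2*x) = -(Real.sqrt 3 / 2) := by
    have hz : (Real.sin (2*x) - Real.sqrt 3/2) * (Real.sin (2*x) + Real.sqrt 3/2) = 0 := by
      nlinarith
    rcases mul_eq_zero.mp hz with h' | h'
    · left; linarith
    · right; linarith
  rw [exp_two_mul_I' x, exp_two_mul_I' y, hc2, hc3, hs, e1, e2]
  rcases hcase with h' | h'
  · rw [h']
  · rw [h', Set.pair_comm, show -(-(Real.sqrt 3/2)) = Real.sqrt 3/2 by ring]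

/-- if the complexity-2 period obstructions `F` and `G` vanish, `r₁ = 1` and at
least one of `r₂ = 1`, `r₃ = 1` holds, then `r₂ = r₃ = 1`, `1 + e^{2iθ₂} + e^{2iθ₃} = 0`, and
`{e^{2iθ₂}, e^{2iθ₃}} = {e^{2πi/3}, e^{-2πi/3}}` (the surface is `H₂`). -/
theorem complexity_two_symmetric_case
    (r₁ r₂ r₃ : ℝ) (hr₁ : 0 < r₁) (hr₂ : 0 < r₂) (hr₃ : 0 < r₃)
    (θ₂ θ₃ : ℝ)
    (hF : (1 + Complex.exp (2 * θ₂ * Complex.I) + Complex.exp (2 * θ₃ * Complex.I)) -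
      (RR r₁ : ℂ) * ((RR r₂ : ℂ) * Complex.exp (θ₂ * Complex.I) +
        (RR r₃ : ℂ) * Complex.exp (θ₃ * Complex.I)) -
      (RR r₂ : ℂ) * (RR r₃ : ℂ) * Complex.exp ((θ₂ + θ₃) * Complex.I) = 0)
    (hG : RR r₂ * Real.cos θ₃ + RR r₃ * Real.cos θ₂ +
      RR r₁ * Real.cos (θ₂ - θ₃) - (1 / 2) * RR r₁ * RR r₂ * RR r₃ = 0)
    (h1 : r₁ = 1) (h23 : r₂ = 1 ∨ r₃ = 1) :
    r₂ = 1 ∧ r₃ = 1 ∧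
    1 + Complex.exp (2 * θ₂ * Complex.I) + Complex.exp (2 * θ₃ * Complex.I) = 0 ∧
    ({Complex.exp (2 * θ₂ * Complex.I), Complex.exp (2 * θ₃ * Complex.I)} : Set ℂ) =
      {Complex.exp (2 * Real.pi * Complex.I / 3),
        Complex.exp (-(2 * Real.pi * Complex.I / 3))} := by
  subst h1
  have main : r₂ = 1 ∧ r₃ = 1 ∧
      1 + Complex.exp (2 * θ₂ * Complex.I) + Complex.exp (2 * θ₃ * Complex.I) = 0 := by
    rcases h23 with h | h
    · subst h
      rw [RR_one] at hF hG
      push_cast at hF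
      simp only [zero_mul, mul_zero, sub_zero, add_zero, zero_add] at hF hG
      have hc := (sum_zero_analysis θ₂ θ₃ hF).1
      have hr3 : RR r₃ = 0 := by
        rcases mul_eq_zero.mp hG with h' | h'
        · exact h'
        · exact absurd h' (cos_ne_zero_of θ₂ hc)
      exact ⟨rfl, RR_eq_zero_iff hr₃ hr3, hF⟩
    · subst h
      rw [RR_one] at hF hG
      push_cast at hF
      simp only [zero_mul, mul_zero, sub_zero, add_zero, zero_add] at hF hG
      have hc := (sum_zero_analysis θ₂ θ₃ hF).2.1
      have hr2 : RR r₂ = 0 := by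
        rcases mul_eq_zero.mp hG with h' | h'
        · exact h'
        · exact absurd h' (cos_ne_zero_of θ₃ hc)
      exact ⟨RR_eq_zero_iff hr₂ hr2, rfl, hF⟩
  obtain ⟨h2, h3, hS⟩ := main
  exact ⟨h2, h3, hS, final_set θ₂ θ₃ hS⟩
end

section
/- Let θ₂ ∈ (π/4, π/3] ∪ [2π/3, 3π/4), set f(θ₂) = √(1 - 8cos(2θ₂) - 8cos(4θ₂)), ρ₁(θ₂) = (1/(8√2))·(√(f(θ₂) - 3)/(cos θ₂ · cos(2θ₂)))·(f(θ₂) + 3 + 4cos(2θ₂)), and ρ₂(θ₂) = -√((f(θ₂) - 3)/2). Then real numbers R₁, R₂ satisfy the system 1 + 2cos(2θ₂) - R₂² = 2R₁R₂cos θ₂ and 2R₂cos θ₂ + R₁cos(2θ₂) = (1/2)R₁R₂² if and only if (R₁, R₂) = (ρ₁(θ₂), ρ₂(θ₂)) or (R₁, R₂) = (-ρ₁(θ₂), -ρ₂(θ₂)). (In particular 1 - 8cos(2θ₂) - 8cos(4θ₂) ≥ 9 on this range, so both square roots are real.) -/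
/-- for `θ₂ ∈ (π/4, π/3] ∪ [2π/3, 3π/4)`, with
`f(θ₂) = √(1 - 8cos(2θ₂) - 8cos(4θ₂))`,
`ρ₁(θ₂) = (1/(8√2))·(√(f(θ₂)-3)/(cos θ₂ cos(2θ₂)))·(f(θ₂)+3+4cos(2θ₂))` and
`ρ₂(θ₂) = -√((f(θ₂)-3)/2)`, one has `1 - 8cos(2θ₂) - 8cos(4θ₂) ≥ 9`, and real numbers
`R₁, R₂` solve the reduced period system iff `(R₁,R₂) = (ρ₁,ρ₂)` or `(R₁,R₂) = (-ρ₁,-ρ₂)`. -/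
theorem reduced_system_solutions
    (θ : ℝ)
    (hθ : θ ∈ Set.Ioc (Real.pi / 4) (Real.pi / 3) ∪
      Set.Ico (2 * Real.pi / 3) (3 * Real.pi / 4))
    (f ρ₁ ρ₂ : ℝ)
    (hf : f = Real.sqrt (1 - 8 * Real.cos (2 * θ) - 8 * Real.cos (4 * θ)))
    (hρ₁ : ρ₁ = (1 / (8 * Real.sqrt 2)) *
      (Real.sqrt (f - 3) / (Real.cos θ * Real.cos (2 * θ))) *
      (f + 3 + 4 * Real.cos (2 * θ)))
    (hρ₂ : ρ₂ = -Real.sqrt ((f - 3) / 2)) :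
    1 - 8 * Real.cos (2 * θ) - 8 * Real.cos (4 * θ) ≥ 9 ∧
    ∀ R₁ R₂ : ℝ,
      (1 + 2 * Real.cos (2 * θ) - R₂ ^ 2 = 2 * R₁ * R₂ * Real.cos θ ∧
        2 * R₂ * Real.cos θ + R₁ * Real.cos (2 * θ) = (1 / 2) * R₁ * R₂ ^ 2) ↔
      ((R₁ = ρ₁ ∧ R₂ = ρ₂) ∨ (R₁ = -ρ₁ ∧ R₂ = -ρ₂)) := by
  have hπ := Real.pi_pos
  set c := Real.cos θ with hc
  set k := Real.cos (2 * θ) with hkdef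
  -- range facts for cos on (π/2, 2π/3]
  have key : ∀ x : ℝ, Real.pi / 2 < x → x ≤ 2 * Real.pi / 3 →
      -1/2 ≤ Real.cos x ∧ Real.cos x < 0 := by
    intro x hx1 hx2
    constructor
    · have h1 : Real.cos (2 * Real.pi / 3) = -(1/2) := by
        have h : 2 * Real.pi / 3 = Real.pi - Real.pi / 3 := by ring
        rw [h, Real.cos_pi_sub, Real.cos_pi_div_three]
      have h2 := Real.cos_le_cos_of_nonneg_of_le_pi
        (show (0:ℝ) ≤ x by linarith) (show 2 * Real.pi / 3 ≤ Real.pi by linarith) hx2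
      rw [h1] at h2; linarith
    · exact Real.cos_neg_of_pi_div_two_lt_of_lt hx1 (by linarith)
  have hkbounds : -1/2 ≤ k ∧ k < 0 := by
    rcases hθ with h | h
    · rw [hkdef]
      exact key (2 * θ) (by linarith [h.1]) (by linarith [h.2])
    · rw [hkdef, ← Real.cos_two_pi_sub (2 * θ)]
      exact key (2 * Real.pi - 2 * θ) (by linarith [h.2]) (by linarith [h.1])
  obtain ⟨hk1, hk0⟩ := hkbounds
  have hkne : k ≠ 0 := ne_of_lt hk0
  have hck : k = 2 * c ^ 2 - 1 := by rw [hkdef, hc]; exact Real.cos_two_mul θ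
  have hc2 : c ^ 2 = (1 + k) / 2 := by linarith
  have hcsq : 0 < c ^ 2 := by nlinarith
  have hcne : c ≠ 0 := by
    intro h; rw [h] at hcsq; simp at hcsq
  have h4θ : Real.cos (4 * θ) = 2 * k ^ 2 - 1 := by
    have h : (4:ℝ) * θ = 2 * (2 * θ) := by ring
    rw [hkdef, h, Real.cos_two_mul]
  have hknn : (0:ℝ) ≤ -(8 * k) - 16 * k ^ 2 := by
    nlinarith [mul_nonneg (neg_nonneg.2 hk0.le) (show (0:ℝ) ≤ 1 + 2 * k by linarith)]
  have hge : 1 - 8 * k - 8 * Real.cos (4 * θ) ≥ 9 := by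
    rw [h4θ]; linarith
  refine ⟨hge, ?_⟩
  have h0 : (0:ℝ) ≤ 1 - 8 * k - 8 * Real.cos (4 * θ) := by linarith
  have hfsq : f ^ 2 = 9 - 8 * k - 16 * k ^ 2 := by
    rw [hf, Real.sq_sqrt h0, h4θ]; ring
  have hfnn : 0 ≤ f := hf ▸ Real.sqrt_nonneg _
  have hf3 : 3 ≤ f := by nlinarith [hfsq, hfnn, hknn]
  have hρ₂v : ρ₂ = -(Real.sqrt (f - 3) / Real.sqrt 2) := by
    rw [hρ₂, Real.sqrt_div (show (0:ℝ) ≤ f - 3 by linarith) 2]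
  have hρ₂sq : ρ₂ ^ 2 = (f - 3) / 2 := by
    rw [hρ₂, neg_sq, Real.sq_sqrt (show (0:ℝ) ≤ (f - 3) / 2 by linarith)]
  have hs2 : Real.sqrt 2 ≠ 0 := by positivity
  have hrel : 8 * c * k * ρ₁ = -(f + 3 + 4 * k) * ρ₂ := by
    rw [hρ₁, hρ₂v]
    field_simp
  have h4kne : (4:ℝ) * k ≠ 0 := mul_ne_zero (by norm_num) hkne
  have h8ckne : (8:ℝ) * c * k ≠ 0 := mul_ne_zero (mul_ne_zero (by norm_num) hcne) hkne
  have heq1ρ : 1 + 2 * k - ρ₂ ^ 2 = 2 * ρ₁ * ρ₂ * c := by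
    have h4 : (1 + 2 * k - ρ₂ ^ 2) * (4 * k) = (2 * ρ₁ * ρ₂ * c) * (4 * k) := by
      linear_combination (-ρ₂) * hrel + (f + 3) * hρ₂sq + (1/2) * hfsq
    exact mul_right_cancel₀ h4kne h4
  have heq2ρ : 2 * ρ₂ * c + ρ₁ * k = (1/2) * ρ₁ * ρ₂ ^ 2 := by
    have h8 : (2 * ρ₂ * c + ρ₁ * k) * (8 * c * k) = ((1/2) * ρ₁ * ρ₂ ^ 2) * (8 * c * k) := by
      linear_combination (k - ρ₂ ^ 2 / 2) * hrel + (16 * ρ₂ * k) * hc2 +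
        (ρ₂ / 2 * (f + 3 + 4 * k)) * hρ₂sq + (ρ₂ / 4) * hfsq
    exact mul_right_cancel₀ h8ckne h8
  intro R₁ R₂
  constructor
  · rintro ⟨e1, e2⟩
    have hq : (R₂ ^ 2 - ρ₂ ^ 2) * (R₂ ^ 2 + (f + 3) / 2) = 0 := by
      linear_combination (4 * R₂ * c) * e2 + (2 * k - R₂ ^ 2) * e1 - (8 * R₂ ^ 2) * hc2 -
        (R₂ ^ 2 + (f + 3) / 2) * hρ₂sq - (1/4) * hfsq
    have hpos : 0 < R₂ ^ 2 + (f + 3) / 2 := by nlinarith [sq_nonneg R₂]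
    have hsq : R₂ ^ 2 = ρ₂ ^ 2 := by
      rcases mul_eq_zero.1 hq with h | h
      · linarith
      · linarith
    have h0' : (R₂ - ρ₂) * (R₂ + ρ₂) = 0 := by linear_combination hsq
    have hcases : R₂ = ρ₂ ∨ R₂ = -ρ₂ := by
      rcases mul_eq_zero.1 h0' with h | h
      · exact Or.inl (sub_eq_zero.1 h)
      · exact Or.inr (eq_neg_of_add_eq_zero_left h)
    by_cases hz : ρ₂ = 0
    · -- degenerate case: f = 3, k = -1/2, everything vanishes
      have hfe : f = 3 := by
        have h := hρ₂sq; rw [hz] at h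
        have : (0:ℝ) = (f - 3) / 2 := by simpa using h
        linarith
      have hρ₁0 : ρ₁ = 0 := by
        have h : 8 * c * k * ρ₁ = 0 := by rw [hrel, hz]; ring
        exact (mul_eq_zero.1 h).resolve_left h8ckne
      have hR2 : R₂ = 0 := by rcases hcases with h | h <;> simp [h, hz]
      rw [hR2] at e2
      have hR1k : R₁ * k = 0 := by linear_combination e2
      have hR1 : R₁ = 0 := (mul_eq_zero.1 hR1k).resolve_right hkne
      exact Or.inl ⟨by rw [hR1, hρ₁0], by rw [hR2, hz]⟩
    · rcases hcases with h | h
      · left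
        refine ⟨?_, h⟩
        rw [h] at e1
        have h2 : R₁ * (2 * ρ₂ * c) = ρ₁ * (2 * ρ₂ * c) := by
          linear_combination heq1ρ - e1
        exact mul_right_cancel₀ (mul_ne_zero (mul_ne_zero two_ne_zero hz) hcne) h2
      · right
        refine ⟨?_, h⟩
        rw [h] at e1
        have h2 : R₁ * (2 * ρ₂ * c) = (-ρ₁) * (2 * ρ₂ * c) := by
          linear_combination e1 - heq1ρ
        exact mul_right_cancel₀ (mul_ne_zero (mul_ne_zero two_ne_zero hz) hcne) h2
  · rintro (⟨h1, h2⟩ | ⟨h1, h2⟩) <;> subst h1 <;> subst h2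
    · exact ⟨heq1ρ, heq2ρ⟩
    · constructor
      · linear_combination heq1ρ
      · linear_combination -heq2ρ
end

section
/- Let m ∈ ℕ with m ≥ 1 and put r = 1/(m+2) and R = (2m+2)/(m(m+2)). Then R > r > 0, (R - r)/r = (m+2)/m, and for every θ ∈ ℝ: -(R - r)·sin(mθ) + r·sin( ((R-r)/r)·mθ ) = -sin(mθ)/m + sin((m+2)θ)/(m+2) and -(R - r)·cos(mθ) - r·cos( ((R-r)/r)·mθ ) = -cos(mθ)/m - cos((m+2)θ)/(m+2). -/
/-- for `m ≥ 1`, `r = 1/(m+2)` and `R = (2m+2)/(m(m+2))` satisfy `R > r > 0`,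
`(R - r)/r = (m+2)/m`, and the hypocycloid of inner radius `r` and outer radius `R`,
reparametrized by `t = mθ`, coincides with the curve
`θ ↦ (-sin(mθ)/m + sin((m+2)θ)/(m+2), -cos(mθ)/m - cos((m+2)θ)/(m+2))`. -/
theorem hypocycloid_parametrization (m : ℕ) (hm : 1 ≤ m) (r R : ℝ)
    (hr : r = 1 / (m + 2)) (hR : R = (2 * m + 2) / (m * (m + 2))) :
    0 < r ∧ r < R ∧ (R - r) / r = (m + 2) / m ∧
    ∀ θ : ℝ,
      (-(R - r) * Real.sin (m * θ) + r * Real.sin (((R - r) / r) * (m * θ)) =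
        -Real.sin (m * θ) / m + Real.sin ((m + 2) * θ) / (m + 2)) ∧
      (-(R - r) * Real.cos (m * θ) - r * Real.cos (((R - r) / r) * (m * θ)) =
        -Real.cos (m * θ) / m - Real.cos ((m + 2) * θ) / (m + 2)) := by
  have hm0 : (0:ℝ) < m := by exact_mod_cast hm
  have hm2 : (0:ℝ) < (m:ℝ) + 2 := by linarith
  have hsub : R - r = 1 / m := by
    rw [hR, hr]; field_simp; ring
  have hdiv : (R - r) / r = ((m:ℝ) + 2) / m := by
    rw [hsub, hr]; field_simp
  refine ⟨by rw [hr]; positivity, ?_, hdiv, fun θ => ?_⟩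
  · have : (0:ℝ) < 1 / m := by positivity
    linarith [hsub]
  · have harg : ((R - r) / r) * ((m:ℝ) * θ) = ((m:ℝ) + 2) * θ := by
      rw [hdiv]; field_simp
    rw [harg, hsub, hr]
    constructor <;> ring
end

section
/- Define f(θ) = √(1 - 8cos(2θ) - 8cos(4θ)), ρ₁(θ) = (1/(8√2))·(√(f(θ) - 3)/(cos θ · cos(2θ)))·(f(θ) + 3 + 4cos(2θ)), and ρ₂(θ) = -√((f(θ) - 3)/2) for θ ∈ (π/4, π/3]. Then: (i) ρ₁(θ) → 0 and ρ₂(θ) → 0 as θ → π/3 from the left; (ii) ρ₁(θ) → -∞ and ρ₂(θ) → 0 as θ → π/4 from the right. -/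
open Filter

/-- `f(θ) = √(1 - 8cos(2θ) - 8cos(4θ))`. -/
noncomputable def fH (θ : ℝ) : ℝ :=
  Real.sqrt (1 - 8 * Real.cos (2 * θ) - 8 * Real.cos (4 * θ))

/-- `ρ₁(θ) = (1/(8√2))·(√(f(θ)-3)/(cos θ cos 2θ))·(f(θ)+3+4cos 2θ)`. -/
noncomputable def ρ₁ (θ : ℝ) : ℝ :=
  (1 / (8 * Real.sqrt 2)) * (Real.sqrt (fH θ - 3) / (Real.cos θ * Real.cos (2 * θ))) *
    (fH θ + 3 + 4 * Real.cos (2 * θ))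

/-- `ρ₂(θ) = -√((f(θ)-3)/2)`. -/
noncomputable def ρ₂ (θ : ℝ) : ℝ := -Real.sqrt ((fH θ - 3) / 2)

lemma sqrt_tendsto_atTop : Tendsto Real.sqrt atTop atTop := by
  apply tendsto_atTop_atTop.2
  intro b
  refine ⟨max 0 b ^ 2, fun a ha => ?_⟩
  calc b ≤ max 0 b := le_max_right _ _
    _ = Real.sqrt (max 0 b ^ 2) := by rw [Real.sqrt_sq (le_max_left _ _)]
    _ ≤ Real.sqrt a := Real.sqrt_le_sqrt ha

lemma continuous_fH : Continuous fH := by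
  unfold fH
  fun_prop

lemma fH_pi_div_three : fH (Real.pi / 3) = 3 := by
  have h1 : Real.cos (2 * (Real.pi / 3)) = -(1 / 2) := by
    have : (2 : ℝ) * (Real.pi / 3) = Real.pi - Real.pi / 3 := by ring
    rw [this, Real.cos_pi_sub, Real.cos_pi_div_three]
  have h2 : Real.cos (4 * (Real.pi / 3)) = -(1 / 2) := by
    have : (4 : ℝ) * (Real.pi / 3) = 2 * (2 * (Real.pi / 3)) := by ring
    rw [this, Real.cos_two_mul, h1]
    norm_num
  rw [fH, h1, h2]
  rw [show (1 : ℝ) - 8 * -(1 / 2) - 8 * -(1 / 2) = 9 by norm_num]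
  rw [show (9 : ℝ) = 3 ^ 2 by norm_num, Real.sqrt_sq (by norm_num)]

lemma fH_pi_div_four : fH (Real.pi / 4) = 3 := by
  have h1 : Real.cos (2 * (Real.pi / 4)) = 0 := by
    rw [show (2 : ℝ) * (Real.pi / 4) = Real.pi / 2 by ring, Real.cos_pi_div_two]
  have h2 : Real.cos (4 * (Real.pi / 4)) = -1 := by
    rw [show (4 : ℝ) * (Real.pi / 4) = Real.pi by ring, Real.cos_pi]
  rw [fH, h1, h2]
  rw [show (1 : ℝ) - 8 * 0 - 8 * (-1) = 9 by norm_num]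
  rw [show (9 : ℝ) = 3 ^ 2 by norm_num, Real.sqrt_sq (by norm_num)]

lemma continuousAt_rho1 : ContinuousAt ρ₁ (Real.pi / 3) := by
  have hc : Real.cos (Real.pi / 3) * Real.cos (2 * (Real.pi / 3)) ≠ 0 := by
    have h1 : Real.cos (2 * (Real.pi / 3)) = -(1 / 2) := by
      have : (2 : ℝ) * (Real.pi / 3) = Real.pi - Real.pi / 3 := by ring
      rw [this, Real.cos_pi_sub, Real.cos_pi_div_three]
    rw [h1, Real.cos_pi_div_three]
    norm_num
  unfold ρ₁
  apply ContinuousAt.mul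
  · apply ContinuousAt.mul continuousAt_const
    apply ContinuousAt.div
    · exact (continuous_fH.sub continuous_const).sqrt.continuousAt
    · fun_prop
    · exact hc
  · exact ((continuous_fH.add continuous_const).add
      (continuous_const.mul (Real.continuous_cos.comp (continuous_const.mul continuous_id)))).continuousAt

lemma rho1_pi_div_three : ρ₁ (Real.pi / 3) = 0 := by
  rw [ρ₁, fH_pi_div_three]
  norm_num

/-- (i) `ρ₁(θ) → 0` and `ρ₂(θ) → 0` as `θ → π/3⁻`;
(ii) `ρ₁(θ) → -∞` and `ρ₂(θ) → 0` as `θ → π/4⁺`. -/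
theorem limits_of_the_one_parameter_family :
    Tendsto ρ₁ (nhdsWithin (Real.pi / 3) (Set.Iio (Real.pi / 3))) (nhds 0) ∧
    Tendsto ρ₂ (nhdsWithin (Real.pi / 3) (Set.Iio (Real.pi / 3))) (nhds 0) ∧
    Tendsto ρ₁ (nhdsWithin (Real.pi / 4) (Set.Ioi (Real.pi / 4))) atBot ∧
    Tendsto ρ₂ (nhdsWithin (Real.pi / 4) (Set.Ioi (Real.pi / 4))) (nhds 0) := by
  have hρ₂cont : Continuous ρ₂ :=
    (((continuous_fH.sub continuous_const).div_const 2).sqrt).neg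
  have hρ₂3 : ρ₂ (Real.pi / 3) = 0 := by
    rw [ρ₂, fH_pi_div_three]
    norm_num
  have hρ₂4 : ρ₂ (Real.pi / 4) = 0 := by
    rw [ρ₂, fH_pi_div_four]
    norm_num
  refine ⟨?_, ?_, ?_, ?_⟩
  · have := continuousAt_rho1.tendsto
    rw [rho1_pi_div_three] at this
    exact this.mono_left nhdsWithin_le_nhds
  · have := hρ₂cont.continuousAt (x := Real.pi / 3).tendsto
    rw [hρ₂3] at this
    exact this.mono_left nhdsWithin_le_nhds
  · -- the hard case : ρ₁ → -∞ as θ → π/4⁺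
    set l := nhdsWithin (Real.pi / 4) (Set.Ioi (Real.pi / 4)) with hl
    have hπ : (0:ℝ) < Real.pi := Real.pi_pos
    have hmem : Set.Ioo (Real.pi / 4) (Real.pi / 3) ∈ l :=
      Ioo_mem_nhdsGT_of_mem ⟨le_refl _, by linarith⟩
    -- basic eventual facts
    have hbasic : ∀ θ ∈ Set.Ioo (Real.pi / 4) (Real.pi / 3),
        Real.cos (2 * θ) < 0 ∧ -(1/2 : ℝ) < Real.cos (2 * θ) ∧ 0 < Real.cos θ := by
      intro θ hθ
      obtain ⟨h1, h2⟩ := hθ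
      refine ⟨?_, ?_, ?_⟩
      · exact Real.cos_neg_of_pi_div_two_lt_of_lt (by linarith) (by linarith)
      · have h3 : Real.cos (2 * (Real.pi / 3)) = -(1 / 2) := by
          rw [show (2 : ℝ) * (Real.pi / 3) = Real.pi - Real.pi / 3 by ring,
            Real.cos_pi_sub, Real.cos_pi_div_three]
        have := Real.cos_lt_cos_of_nonneg_of_le_pi (by linarith) (by linarith)
          (show 2 * θ < 2 * (Real.pi / 3) by linarith)
        rw [h3] at this
        linarith
      · exact Real.cos_pos_of_mem_Ioo ⟨by linarith, by linarith⟩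
    -- expression for fH in terms of c = cos 2θ
    have hfH : ∀ θ : ℝ, fH θ =
        Real.sqrt (9 - 8 * Real.cos (2 * θ) - 16 * Real.cos (2 * θ) ^ 2) := by
      intro θ
      have h4 : Real.cos (4 * θ) = 2 * Real.cos (2 * θ) ^ 2 - 1 := by
        rw [show (4:ℝ) * θ = 2 * (2 * θ) by ring, Real.cos_two_mul]
      rw [fH, h4]
      congr 1
      ring
    have hfsq : ∀ θ ∈ Set.Ioo (Real.pi / 4) (Real.pi / 3),
        fH θ ^ 2 = 9 - 8 * Real.cos (2 * θ) - 16 * Real.cos (2 * θ) ^ 2 := by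
      intro θ hθ
      obtain ⟨hcneg, hcgt, _⟩ := hbasic θ hθ
      rw [hfH θ]
      apply Real.sq_sqrt
      nlinarith
    have hfge3 : ∀ θ ∈ Set.Ioo (Real.pi / 4) (Real.pi / 3), 3 ≤ fH θ := by
      intro θ hθ
      obtain ⟨hcneg, hcgt, _⟩ := hbasic θ hθ
      have h0 : 0 ≤ fH θ := by rw [hfH θ]; exact Real.sqrt_nonneg _
      have := hfsq θ hθ
      nlinarith
    -- the auxiliary functions
    set B : ℝ → ℝ := fun θ =>
      (1 / (8 * Real.sqrt 2)) * ((fH θ + 3 + 4 * Real.cos (2 * θ)) / Real.cos θ) with hB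
    set g : ℝ → ℝ := fun θ =>
      (8 + 16 * Real.cos (2 * θ)) / ((-Real.cos (2 * θ)) * (fH θ + 3)) with hg
    set S : ℝ → ℝ := fun θ => Real.sqrt (g θ) with hS
    -- eventual equality ρ₁ = -(B * S)
    have heq : ∀ᶠ θ in l, ρ₁ θ = -(B θ * S θ) := by
      filter_upwards [hmem] with θ hθ
      obtain ⟨hcneg, hcgt, hcosθ⟩ := hbasic θ hθ
      have hf3 := hfge3 θ hθ
      have hfsq' := hfsq θ hθ
      have hgnn : 0 ≤ g θ := by
        apply div_nonneg
        · nlinarith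
        · apply mul_nonneg <;> nlinarith
      have hne1 : -Real.cos (2 * θ) * (fH θ + 3) ≠ 0 :=
        ne_of_gt (mul_pos (by linarith) (by linarith))
      have hkey : fH θ - 3 = g θ * Real.cos (2 * θ) ^ 2 := by
        rw [hg]
        simp only
        rw [div_mul_eq_mul_div, eq_comm, div_eq_iff hne1]
        linear_combination Real.cos (2 * θ) * hfsq'
      have hsqrt : Real.sqrt (fH θ - 3) = S θ * (-Real.cos (2 * θ)) := by
        rw [hkey, Real.sqrt_mul hgnn, Real.sqrt_sq_eq_abs, abs_of_neg hcneg, hS]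
      rw [ρ₁, hsqrt, hB, hS]
      have hcne : Real.cos (2 * θ) ≠ 0 := ne_of_lt hcneg
      have hcosne : Real.cos θ ≠ 0 := ne_of_gt hcosθ
      field_simp
    -- B tends to 3/4
    have hBlim : Tendsto B l (nhds (3 / 4)) := by
      have hcosπ4 : Real.cos (Real.pi / 4) ≠ 0 := by
        rw [Real.cos_pi_div_four]; positivity
      have hcont : ContinuousAt B (Real.pi / 4) := by
        apply ContinuousAt.mul continuousAt_const
        exact ContinuousAt.div
          ((continuous_fH.add continuous_const).add
            (continuous_const.mul (Real.continuous_cos.comp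
              (continuous_const.mul continuous_id)))).continuousAt
          Real.continuous_cos.continuousAt hcosπ4
      have hval : B (Real.pi / 4) = 3 / 4 := by
        rw [hB]
        simp only
        rw [fH_pi_div_four, show (2:ℝ) * (Real.pi / 4) = Real.pi / 2 by ring,
          Real.cos_pi_div_two, Real.cos_pi_div_four]
        have h2 : Real.sqrt 2 ^ 2 = 2 := Real.sq_sqrt (by norm_num)
        have h2ne : Real.sqrt 2 ≠ 0 := by positivity
        field_simp
        nlinarith
      have := hcont.tendsto
      rw [hval] at this
      exact this.mono_left nhdsWithin_le_nhds
    -- g tends to atTop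
    have hglim : Tendsto g l atTop := by
      have hnum : Tendsto (fun θ => 8 + 16 * Real.cos (2 * θ)) l (nhds 8) := by
        have hcont : ContinuousAt (fun θ : ℝ => 8 + 16 * Real.cos (2 * θ)) (Real.pi / 4) := by
          fun_prop
        have := hcont.tendsto
        rw [show (8:ℝ) + 16 * Real.cos (2 * (Real.pi / 4)) = 8 by
          rw [show (2:ℝ) * (Real.pi / 4) = Real.pi / 2 by ring, Real.cos_pi_div_two]; ring]
          at this
        exact this.mono_left nhdsWithin_le_nhds
      have hden : Tendsto (fun θ => (-Real.cos (2 * θ)) * (fH θ + 3)) l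
          (nhdsWithin 0 (Set.Ioi 0)) := by
        rw [tendsto_nhdsWithin_iff]
        constructor
        · have hcont : ContinuousAt (fun θ : ℝ => (-Real.cos (2 * θ)) * (fH θ + 3))
              (Real.pi / 4) := by
            exact ContinuousAt.mul
              (Real.continuous_cos.comp (continuous_const.mul continuous_id)).neg.continuousAt
              (continuous_fH.add continuous_const).continuousAt
          have := hcont.tendsto
          rw [show -Real.cos (2 * (Real.pi / 4)) * (fH (Real.pi / 4) + 3) = 0 by
            rw [show (2:ℝ) * (Real.pi / 4) = Real.pi / 2 by ring, Real.cos_pi_div_two]; ring]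
            at this
          exact this.mono_left nhdsWithin_le_nhds
        · filter_upwards [hmem] with θ hθ
          obtain ⟨hcneg, _, _⟩ := hbasic θ hθ
          have h3 := hfge3 θ hθ
          simp only [Set.mem_Ioi]
          exact mul_pos (by linarith) (by linarith)
      have hinv : Tendsto (fun θ => ((-Real.cos (2 * θ)) * (fH θ + 3))⁻¹) l atTop :=
        hden.inv_tendsto_nhdsGT_zero
      have hmul' := hinv.atTop_mul_pos (by norm_num : (0:ℝ) < 8) hnum
      refine hmul'.congr fun θ => ?_
      rw [hg]
      simp only
      rw [div_eq_mul_inv, mul_comm]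
    have hSlim : Tendsto S l atTop := sqrt_tendsto_atTop.comp hglim
    have hmul : Tendsto (fun θ => B θ * S θ) l atTop :=
      hBlim.pos_mul_atTop (by norm_num) hSlim
    have hneg : Tendsto (fun θ => -(B θ * S θ)) l atBot :=
      tendsto_neg_atTop_atBot.comp hmul
    exact hneg.congr' (Filter.EventuallyEq.symm heq)
  · have := hρ₂cont.continuousAt (x := Real.pi / 4).tendsto
    rw [hρ₂4] at this
    exact this.mono_left nhdsWithin_le_nhds
end
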